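/- arXiv:2009.07131 — 6 statements merged into one kernel-verified Lean document; each statement's English description precedes it below -/
import Mathlib

section
/- Let μ ∈ ℝ and ρ > 0 with |μ| < 1/ρ. Viewing K_ρ as the function K_ρ(φ, s) = K_ρ(s) on [0, 2π) × ℝ, for every x ∈ ℝ² one has T_{−μ}♯ K_ρ(x) = 2 ∫_0^{1/ρ} σ J₀(‖x‖ σ) dσ; in particular the left-hand side does not depend on μ. -/
open MeasureTheory Real Filter

noncomputable section

/-- The Euclidean plane. -/
abbrev R2 := EuclideanSpace ℝ (Fin 2)

/-- The unit vector `θ(φ) = (cos φ, sin φ)`. -/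
def theta (φ : ℝ) : R2 := (WithLp.equiv 2 _).symm ![Real.cos φ, Real.sin φ]

/-- The perpendicular unit vector `θ⊥(φ) = (-sin φ, cos φ)`. -/
def thetaPerp (φ : ℝ) : R2 := (WithLp.equiv 2 _).symm ![-Real.sin φ, Real.cos φ]

/-- The Euclidean dot product on `ℝ²`. -/
def dot (x y : R2) : ℝ := inner ℝ x y

/-- The dual transform `T_μ♯ g(x) = ∫_0^{2π} e^{μ x·θ⊥(φ)} g(φ, x·θ(φ)) dφ`. -/
def dualERT (μ : ℝ) (g : ℝ → ℝ → ℝ) (x : R2) : ℝ :=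
  ∫ φ in (0:ℝ)..(2 * π), Real.exp (μ * dot x (thetaPerp φ)) * g φ (dot x (theta φ))

/-- The FBP kernel `K_ρ(s) = (1/π) ∫_{|μ|}^{√(ρ⁻² + μ²)} r cos(s r) dr`. -/
def Krho (μ ρ : ℝ) (s : ℝ) : ℝ :=
  (1 / π) * ∫ r in (|μ|)..(Real.sqrt (ρ⁻¹ ^ 2 + μ ^ 2)), r * Real.cos (s * r)

/-- The Bessel function of the first kind of order `0`,
`J₀(r) = (1/(2π)) ∫_0^{2π} e^{i r sin φ} dφ` (complex-valued integral). -/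
def J0 (r : ℝ) : ℂ :=
  (1 / (2 * π) : ℝ) * ∫ φ in (0:ℝ)..(2 * π), Complex.exp (Complex.I * (r * Real.sin φ : ℝ))

/-! ### Auxiliary lemmas -/

open Set

set_option maxHeartbeats 1000000

/-- Fubini for interval integrals of continuous functions (ordered endpoints). -/
lemma fubini_base {f : ℝ → ℝ → ℝ} (hf : Continuous (Function.uncurry f))
    {a b c d : ℝ} (hab : a ≤ b) (hcd : c ≤ d) :
    ∫ t in a..b, ∫ φ in c..d, f t φ = ∫ φ in c..d, ∫ t in a..b, f t φ := by
  simp only [intervalIntegral.integral_of_le hab, intervalIntegral.integral_of_le hcd]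
  have hint : Integrable (Function.uncurry f)
      ((volume.restrict (Ioc a b)).prod (volume.restrict (Ioc c d))) := by
    rw [Measure.prod_restrict]
    have h1 : IntegrableOn (Function.uncurry f) (Icc a b ×ˢ Icc c d)
        ((volume : Measure ℝ).prod volume) :=
      hf.continuousOn.integrableOn_compact (isCompact_Icc.prod isCompact_Icc)
    exact h1.mono_set (Set.prod_mono Ioc_subset_Icc_self Ioc_subset_Icc_self)
  exact MeasureTheory.integral_integral_swap hint

/-- Fubini for interval integrals of continuous functions. -/
lemma fubini {f : ℝ → ℝ → ℝ} (hf : Continuous (Function.uncurry f)) (a b c d : ℝ) :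
    ∫ t in a..b, ∫ φ in c..d, f t φ = ∫ φ in c..d, ∫ t in a..b, f t φ := by
  rcases le_total a b with hab | hab <;> rcases le_total c d with hcd | hcd
  · exact fubini_base hf hab hcd
  · simp only [intervalIntegral.integral_symm d c, intervalIntegral.integral_neg, neg_inj]
    exact fubini_base hf hab hcd
  · simp only [intervalIntegral.integral_symm b a, intervalIntegral.integral_neg, neg_inj]
    exact fubini_base hf hab hcd
  · simp only [intervalIntegral.integral_symm b a, intervalIntegral.integral_symm d c,
      intervalIntegral.integral_neg, neg_neg, neg_inj]
    exact fubini_base hf hab hcd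

/-- Substitution `u = σ²`. -/
lemma sq_subst {g : ℝ → ℝ} (hg : Continuous g) (a b : ℝ) :
    ∫ σ in a..b, σ * g (σ ^ 2) = (1 / 2) * ∫ u in (a ^ 2)..(b ^ 2), g u := by
  have h : ∀ y ∈ uIcc a b, HasDerivAt (fun σ : ℝ => σ ^ 2) (2 * y) y := by
    intro y _
    simpa using hasDerivAt_pow 2 y
  have h2 := intervalIntegral.integral_comp_smul_deriv h (by fun_prop) hg
  simp only [smul_eq_mul, Function.comp, mul_assoc] at h2
  rw [intervalIntegral.integral_const_mul] at h2
  rw [← h2]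
  ring

/-- The kernel written as an integral over `σ ∈ [0, 1/ρ]`. -/
lemma krho_eq (μ ρ : ℝ) (s : ℝ) :
    Krho μ ρ s = (1 / π) * ∫ σ in (0:ℝ)..(1/ρ),
      σ * Real.cos (s * Real.sqrt (σ ^ 2 + μ ^ 2)) := by
  have hg : Continuous fun u : ℝ => Real.cos (s * Real.sqrt (u + μ ^ 2)) := by fun_prop
  unfold Krho
  congr 1
  have hR : |μ| ≤ Real.sqrt (ρ⁻¹ ^ 2 + μ ^ 2) := by
    rw [← Real.sqrt_sq_eq_abs]
    exact Real.sqrt_le_sqrt (le_add_of_nonneg_left (by positivity))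
  have h1 : ∫ r in (|μ|)..(Real.sqrt (ρ⁻¹ ^ 2 + μ ^ 2)), r * Real.cos (s * r)
      = ∫ r in (|μ|)..(Real.sqrt (ρ⁻¹ ^ 2 + μ ^ 2)),
          r * Real.cos (s * Real.sqrt (r ^ 2 - μ ^ 2 + μ ^ 2)) := by
    apply intervalIntegral.integral_congr
    intro r hr
    rw [uIcc_of_le hR] at hr
    have hr0 : 0 ≤ r := le_trans (abs_nonneg μ) hr.1
    simp only []
    rw [sub_add_cancel, Real.sqrt_sq hr0]
  have h2 : ∫ σ in (0:ℝ)..(1/ρ), σ * Real.cos (s * Real.sqrt (σ ^ 2 + μ ^ 2))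
      = (1/2) * ∫ u in ((0:ℝ)^2)..((1/ρ)^2), Real.cos (s * Real.sqrt (u + μ ^ 2)) :=
    sq_subst hg 0 (1/ρ)
  have h3 : ∫ r in (|μ|)..(Real.sqrt (ρ⁻¹ ^ 2 + μ ^ 2)),
        r * Real.cos (s * Real.sqrt (r ^ 2 - μ ^ 2 + μ ^ 2))
      = (1/2) * ∫ u in (|μ| ^ 2)..(Real.sqrt (ρ⁻¹ ^ 2 + μ ^ 2) ^ 2),
          Real.cos (s * Real.sqrt (u - μ ^ 2 + μ ^ 2)) :=
    sq_subst (g := fun u => Real.cos (s * Real.sqrt (u - μ ^ 2 + μ ^ 2))) (by fun_prop) _ _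
  rw [h1, h3, h2]
  have e1 : (Real.sqrt (ρ⁻¹ ^ 2 + μ ^ 2)) ^ 2 = ρ⁻¹ ^ 2 + μ ^ 2 :=
    Real.sq_sqrt (by positivity)
  have e2 : |μ| ^ 2 = μ ^ 2 := sq_abs μ
  rw [e1, e2]
  congr 1
  have h4 : ∫ u in ((0:ℝ))..((1/ρ)^2), Real.cos (s * Real.sqrt (u + μ ^ 2))
      = ∫ u in (0 + μ ^ 2)..((1/ρ)^2 + μ ^ 2), Real.cos (s * Real.sqrt (u - μ^2 + μ ^ 2)) := by
    rw [← intervalIntegral.integral_comp_add_right]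
    simp
  rw [show ((0:ℝ))^2 = 0 by ring, h4]
  rw [zero_add, one_div, inv_pow]

/-- The key identity: the `μ`-twisted angular integral does not depend on `μ`. -/
lemma key' (p q : ℝ → ℝ) (hpc : Continuous p) (hqc : Continuous q)
    (hq : ∀ φ, HasDerivAt q (p φ) φ) (hp : ∀ φ, HasDerivAt p (-(q φ)) φ)
    (hqper : q (2 * π) = q 0) (hpper : p (2 * π) = p 0)
    (μ σ : ℝ) (hσ : 0 < σ) :
    ∫ φ in (0:ℝ)..(2 * π), Real.exp (-(μ * p φ)) * Real.cos (q φ * Real.sqrt (σ ^ 2 + μ ^ 2))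
      = ∫ φ in (0:ℝ)..(2 * π), Real.cos (q φ * σ) := by
  set R : ℝ → ℝ := fun t => Real.sqrt (σ ^ 2 + t ^ 2) with hRdef
  have hRpos : ∀ t, 0 < R t := fun t => Real.sqrt_pos.2 (by positivity)
  have hRc : Continuous R := by fun_prop
  have hRder : ∀ t, HasDerivAt R (t / R t) t := by
    intro t
    have h1 : HasDerivAt (fun t : ℝ => σ ^ 2 + t ^ 2) (2 * t) t := by
      simpa using (hasDerivAt_pow 2 t).const_add (σ ^ 2)
    have h2 := (Real.hasDerivAt_sqrt (by positivity : σ ^ 2 + t ^ 2 ≠ 0)).comp t h1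
    refine HasDerivAt.congr_deriv (by rw [hRdef]; exact h2) ?_
    rw [hRdef]
    field_simp
  set F : ℝ → ℝ → ℝ := fun t φ => Real.exp (-(t * p φ)) * Real.cos (q φ * R t) with hFdef
  set dPhi : ℝ → ℝ → ℝ := fun t φ => Real.exp (-(t * p φ)) *
      (t * q φ / R t * Real.sin (q φ * R t) + p φ * Real.cos (q φ * R t)) with hdPhidef
  set Phi : ℝ → ℝ → ℝ := fun t φ => Real.exp (-(t * p φ)) * Real.sin (q φ * R t) / R t
    with hPhidef
  have hdPhic : Continuous (Function.uncurry dPhi) := by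
    apply Continuous.mul
    · exact (((continuous_fst.mul (hpc.comp continuous_snd)).neg).rexp)
    · apply Continuous.add
      · exact ((continuous_fst.mul (hqc.comp continuous_snd)).div (hRc.comp continuous_fst)
          (fun z => (hRpos z.1).ne')).mul
          (Real.continuous_sin.comp ((hqc.comp continuous_snd).mul (hRc.comp continuous_fst)))
      · exact (hpc.comp continuous_snd).mul
          (Real.continuous_cos.comp ((hqc.comp continuous_snd).mul (hRc.comp continuous_fst)))
  have hFt : ∀ t φ, HasDerivAt (fun t => F t φ) (-(dPhi t φ)) t := by
    intro t φ
    have e1 : HasDerivAt (fun t : ℝ => -(t * p φ)) (-(p φ)) t := by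
      exact (((hasDerivAt_id t).mul_const (p φ)).neg).congr_deriv (by simp)
    have e2 := e1.exp
    have e3 : HasDerivAt (fun t => q φ * R t) (q φ * (t / R t)) t := (hRder t).const_mul (q φ)
    have e4 := e3.cos
    have := e2.mul e4
    refine this.congr_deriv ?_
    have hR0 : R t ≠ 0 := (hRpos t).ne'
    simp only [hdPhidef]
    field_simp
    ring
  have hPhiφ : ∀ t φ, HasDerivAt (fun φ => Phi t φ) (dPhi t φ) φ := by
    intro t φ
    have e1 : HasDerivAt (fun φ : ℝ => -(t * p φ)) (-(t * -(q φ))) φ := ((hp φ).const_mul t).neg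
    have e2 := e1.exp
    have e3 : HasDerivAt (fun φ => q φ * R t) (p φ * R t) φ := (hq φ).mul_const (R t)
    have e4 := e3.sin
    have e5 := (e2.mul e4).div_const (R t)
    refine e5.congr_deriv ?_
    have hR0 : R t ≠ 0 := (hRpos t).ne'
    simp only [hPhidef, hdPhidef]
    field_simp
  have step1 : ∀ φ, F μ φ - F 0 φ = ∫ t in (0:ℝ)..μ, -(dPhi t φ) := by
    intro φ
    have hcont : Continuous fun t => -(dPhi t φ) := (hdPhic.uncurry_right φ).neg
    exact (intervalIntegral.integral_eq_sub_of_hasDerivAt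
      (fun t _ => hFt t φ) (hcont.intervalIntegrable _ _)).symm
  have step2 : ∀ t, ∫ φ in (0:ℝ)..(2 * π), dPhi t φ = 0 := by
    intro t
    have hcont : Continuous fun φ => dPhi t φ := hdPhic.uncurry_left t
    rw [intervalIntegral.integral_eq_sub_of_hasDerivAt
      (fun φ _ => hPhiφ t φ) (hcont.intervalIntegrable _ _)]
    rw [hPhidef]
    simp only [hqper, hpper]
    ring
  have hFμc : Continuous fun φ => F μ φ := by
    rw [hFdef]; fun_prop
  have hF0c : Continuous fun φ => F 0 φ := by
    rw [hFdef]; fun_prop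
  have hzero : ∫ φ in (0:ℝ)..(2 * π), (F μ φ - F 0 φ) = 0 := by
    rw [intervalIntegral.integral_congr (g := fun φ => ∫ t in (0:ℝ)..μ, -(dPhi t φ))
      (fun φ _ => step1 φ)]
    have hswap := fubini (f := fun φ t => -(dPhi t φ))
      (by exact (hdPhic.comp continuous_swap).neg) 0 (2 * π) 0 μ
    rw [hswap]
    have : ∀ t, ∫ φ in (0:ℝ)..(2 * π), -(dPhi t φ) = 0 := by
      intro t
      rw [intervalIntegral.integral_neg, step2 t, neg_zero]
    simp only [this, intervalIntegral.integral_zero]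
  have hsub : ∫ φ in (0:ℝ)..(2 * π), (F μ φ - F 0 φ)
      = (∫ φ in (0:ℝ)..(2 * π), F μ φ) - ∫ φ in (0:ℝ)..(2 * π), F 0 φ :=
    intervalIntegral.integral_sub (hFμc.intervalIntegrable _ _) (hF0c.intervalIntegrable _ _)
  have hmain : ∫ φ in (0:ℝ)..(2 * π), F μ φ = ∫ φ in (0:ℝ)..(2 * π), F 0 φ := by
    rw [hsub] at hzero
    linarith
  have hF0 : ∀ φ, F 0 φ = Real.cos (q φ * σ) := by
    intro φ
    rw [hFdef]
    simp only [zero_mul, neg_zero, Real.exp_zero, one_mul, hRdef]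
    rw [show σ ^ 2 + 0 ^ 2 = σ ^ 2 by ring, Real.sqrt_sq hσ.le]
  calc ∫ φ in (0:ℝ)..(2 * π), Real.exp (-(μ * p φ)) * Real.cos (q φ * Real.sqrt (σ ^ 2 + μ ^ 2))
      = ∫ φ in (0:ℝ)..(2 * π), F μ φ := by rw [hFdef]
    _ = ∫ φ in (0:ℝ)..(2 * π), F 0 φ := hmain
    _ = ∫ φ in (0:ℝ)..(2 * π), Real.cos (q φ * σ) :=
        intervalIntegral.integral_congr (fun φ _ => hF0 φ)

lemma sin_int_zero (r : ℝ) : ∫ φ in (0:ℝ)..(2 * π), Real.sin (r * Real.sin φ) = 0 := by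
  set f : ℝ → ℝ := fun φ => Real.sin (r * Real.sin φ) with hfdef
  have hper : Function.Periodic f (2 * π) := fun φ => by
    simp [hfdef, Real.sin_add_two_pi]
  have h1 : ∫ φ in (0:ℝ)..(2 * π), f (φ + π) = ∫ φ in π..(2 * π + π), f φ := by
    simpa using intervalIntegral.integral_comp_add_right (a := 0) (b := 2 * π) f π
  have h2 : ∫ φ in π..(2 * π + π), f φ = ∫ φ in (0:ℝ)..(2 * π), f φ := by
    have := hper.intervalIntegral_add_eq π 0
    simpa [add_comm] using this
  have h3 : ∀ φ, f (φ + π) = -f φ := by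
    intro φ
    simp [hfdef, Real.sin_add_pi, mul_neg, Real.sin_neg]
  have h4 : ∫ φ in (0:ℝ)..(2 * π), f (φ + π) = -∫ φ in (0:ℝ)..(2 * π), f φ := by
    simp_rw [h3]
    exact intervalIntegral.integral_neg
  have h5 := h1.trans h2
  linarith [h4, h5]

/-- Rotation invariance of the angular cosine integral. -/
lemma circ (A B σ : ℝ) :
    ∫ φ in (0:ℝ)..(2 * π), Real.cos ((A * Real.cos φ + B * Real.sin φ) * σ)
      = ∫ φ in (0:ℝ)..(2 * π), Real.cos (Real.sqrt (A ^ 2 + B ^ 2) * σ * Real.sin φ) := by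
  set r : ℝ := Real.sqrt (A ^ 2 + B ^ 2) with hrdef
  rcases eq_or_lt_of_le (Real.sqrt_nonneg (A ^ 2 + B ^ 2)) with hr0 | hrpos
  · have hAB : A ^ 2 + B ^ 2 = 0 := by
      have := Real.sqrt_eq_zero'.1 hr0.symm
      nlinarith [sq_nonneg A, sq_nonneg B]
    have hA : A = 0 := by nlinarith [sq_nonneg A, sq_nonneg B]
    have hB : B = 0 := by nlinarith [sq_nonneg A, sq_nonneg B]
    simp [hA, hB, hrdef, ← hr0]
  · set β : ℝ := Complex.arg ⟨B, A⟩ with hβdef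
    have habs : ‖(⟨B, A⟩ : ℂ)‖ = r := by
      simp [Complex.norm_def, Complex.normSq_mk, hrdef]
      ring_nf
    have hB : B = r * Real.cos β := by
      have h := Complex.norm_mul_cos_arg ⟨B, A⟩
      rw [habs] at h
      simpa [hβdef] using h.symm
    have hA : A = r * Real.sin β := by
      have h := Complex.norm_mul_sin_arg ⟨B, A⟩
      rw [habs] at h
      simpa [hβdef] using h.symm
    have hrep : ∀ φ, (A * Real.cos φ + B * Real.sin φ) * σ = r * σ * Real.sin (φ + β) := by
      intro φ
      rw [hA, hB, Real.sin_add]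
      ring
    simp_rw [hrep]
    have hper : Function.Periodic (fun ψ => Real.cos (r * σ * Real.sin ψ)) (2 * π) := fun ψ => by
      simp [Real.sin_add_two_pi]
    have h1 : ∫ φ in (0:ℝ)..(2 * π), Real.cos (r * σ * Real.sin (φ + β))
        = ∫ φ in β..(2 * π + β), Real.cos (r * σ * Real.sin φ) := by
      simpa using intervalIntegral.integral_comp_add_right (a := 0) (b := 2 * π)
        (fun φ => Real.cos (r * σ * Real.sin φ)) β
    rw [h1]
    have := hper.intervalIntegral_add_eq β 0
    simpa [add_comm] using this

lemma dot_theta (x : R2) (φ : ℝ) :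
    dot x (theta φ) = x 0 * Real.cos φ + x 1 * Real.sin φ := by
  simp [dot, theta, PiLp.inner_apply, RCLike.inner_apply, Fin.sum_univ_two,
    WithLp.equiv_symm_apply, Matrix.cons_val_zero, Matrix.cons_val_one, Matrix.head_cons]
  ring

lemma dot_thetaPerp (x : R2) (φ : ℝ) :
    dot x (thetaPerp φ) = -(x 0 * Real.sin φ) + x 1 * Real.cos φ := by
  simp [dot, thetaPerp, PiLp.inner_apply, RCLike.inner_apply, Fin.sum_univ_two,
    WithLp.equiv_symm_apply, Matrix.cons_val_zero, Matrix.cons_val_one, Matrix.head_cons]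
  ring

lemma norm_eq_x (x : R2) : ‖x‖ = Real.sqrt ((x 0) ^ 2 + (x 1) ^ 2) := by
  rw [EuclideanSpace.norm_eq]
  simp [Fin.sum_univ_two, Real.norm_eq_abs, sq_abs]

/-- `J₀` is real-valued. -/
lemma J0_eq (r : ℝ) :
    J0 r = (((1 / (2 * π)) * ∫ φ in (0:ℝ)..(2 * π), Real.cos (r * Real.sin φ) : ℝ) : ℂ) := by
  unfold J0
  have h1 : ∀ φ : ℝ, Complex.exp (Complex.I * ((r * Real.sin φ : ℝ) : ℂ)) =
      ((Real.cos (r * Real.sin φ) : ℝ) : ℂ)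
        + ((Real.sin (r * Real.sin φ) : ℝ) : ℂ) * Complex.I := by
    intro φ
    rw [mul_comm, Complex.exp_mul_I, Complex.ofReal_cos, Complex.ofReal_sin]
  simp_rw [h1]
  rw [intervalIntegral.integral_add]
  · rw [intervalIntegral.integral_mul_const, intervalIntegral.integral_ofReal,
      intervalIntegral.integral_ofReal, sin_int_zero r]
    push_cast
    ring
  · apply Continuous.intervalIntegrable
    fun_prop
  · apply Continuous.intervalIntegrable
    fun_prop

/-- Main theorem, real-valued version. -/
lemma dual_of_kernel_real (μ ρ : ℝ) (x : R2) :
    dualERT (-μ) (fun _ s => Krho μ ρ s) x =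
      2 * ∫ σ in (0:ℝ)..(1 / ρ), σ *
        ((1 / (2 * π)) * ∫ φ in (0:ℝ)..(2 * π), Real.cos (‖x‖ * σ * Real.sin φ)) := by
  have hcontQ : Continuous fun φ => x 0 * Real.cos φ + x 1 * Real.sin φ := by fun_prop
  have hcontP : Continuous fun φ => -(x 0 * Real.sin φ) + x 1 * Real.cos φ := by fun_prop
  -- Step 1: rewrite the dual transform as a double integral
  have G1 : dualERT (-μ) (fun _ s => Krho μ ρ s) x
      = (1 / π) * ∫ φ in (0:ℝ)..(2 * π), ∫ σ in (0:ℝ)..(1/ρ),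
          Real.exp (-(μ * (-(x 0 * Real.sin φ) + x 1 * Real.cos φ)))
            * (σ * Real.cos ((x 0 * Real.cos φ + x 1 * Real.sin φ)
                * Real.sqrt (σ ^ 2 + μ ^ 2))) := by
    unfold dualERT
    rw [← intervalIntegral.integral_const_mul]
    apply intervalIntegral.integral_congr
    intro φ _
    simp only []
    rw [krho_eq, dot_theta, dot_thetaPerp, intervalIntegral.integral_const_mul
      (Real.exp (-(μ * (-(x 0 * Real.sin φ) + x 1 * Real.cos φ))))]
    rw [neg_mul]
    have : ∀ σ : ℝ, Real.exp (-(μ * (-(x 0 * Real.sin φ) + x 1 * Real.cos φ)))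
        * (σ * Real.cos ((x 0 * Real.cos φ + x 1 * Real.sin φ) * Real.sqrt (σ ^ 2 + μ ^ 2)))
        = Real.exp (-(μ * (-(x 0 * Real.sin φ) + x 1 * Real.cos φ)))
        * (σ * Real.cos ((x 0 * Real.cos φ + x 1 * Real.sin φ) * Real.sqrt (σ ^ 2 + μ ^ 2))) :=
      fun _ => rfl
    ring
  rw [G1]
  -- Step 2: swap the two integrals
  rw [fubini (f := fun φ σ => Real.exp (-(μ * (-(x 0 * Real.sin φ) + x 1 * Real.cos φ)))
      * (σ * Real.cos ((x 0 * Real.cos φ + x 1 * Real.sin φ) * Real.sqrt (σ ^ 2 + μ ^ 2))))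
    (by
      apply Continuous.mul
      · apply Real.continuous_exp.comp
        exact ((continuous_const.mul ((hcontP.comp continuous_fst))).neg)
      · exact continuous_snd.mul (Real.continuous_cos.comp
          ((hcontQ.comp continuous_fst).mul (by fun_prop)))) 0 (2 * π) 0 (1/ρ)]
  -- Step 3: evaluate the inner integral
  have G3 : ∀ σ ∈ uIcc (0:ℝ) (1/ρ),
      (∫ φ in (0:ℝ)..(2 * π),
        Real.exp (-(μ * (-(x 0 * Real.sin φ) + x 1 * Real.cos φ)))
          * (σ * Real.cos ((x 0 * Real.cos φ + x 1 * Real.sin φ)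
              * Real.sqrt (σ ^ 2 + μ ^ 2))))
      = σ * ((1 / (2 * π)) * ∫ φ in (0:ℝ)..(2 * π), Real.cos (‖x‖ * σ * Real.sin φ)) * (2 * π)
      := by
    intro σ _
    rcases eq_or_ne σ 0 with rfl | hσne
    · simp
    -- pull σ out
    have hpull : (∫ φ in (0:ℝ)..(2 * π),
          Real.exp (-(μ * (-(x 0 * Real.sin φ) + x 1 * Real.cos φ)))
            * (σ * Real.cos ((x 0 * Real.cos φ + x 1 * Real.sin φ)
                * Real.sqrt (σ ^ 2 + μ ^ 2))))
        = σ * ∫ φ in (0:ℝ)..(2 * π),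
            Real.exp (-(μ * (-(x 0 * Real.sin φ) + x 1 * Real.cos φ)))
              * Real.cos ((x 0 * Real.cos φ + x 1 * Real.sin φ)
                  * Real.sqrt (σ ^ 2 + μ ^ 2)) := by
      rw [← intervalIntegral.integral_const_mul]
      apply intervalIntegral.integral_congr
      intro φ _
      simp only []
      ring
    rw [hpull]
    -- now handle σ > 0 versus σ < 0 : the integral depends only on σ²
    have habs : Real.sqrt (σ ^ 2 + μ ^ 2) = Real.sqrt (|σ| ^ 2 + μ ^ 2) := by
      rw [sq_abs]
    have hkey := key' (fun φ => -(x 0 * Real.sin φ) + x 1 * Real.cos φ)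
      (fun φ => x 0 * Real.cos φ + x 1 * Real.sin φ) hcontP hcontQ
      (fun φ => by
        have := ((Real.hasDerivAt_cos φ).const_mul (x 0)).add
          ((Real.hasDerivAt_sin φ).const_mul (x 1))
        refine this.congr_deriv ?_
        ring)
      (fun φ => by
        have := (((Real.hasDerivAt_sin φ).const_mul (x 0)).neg).add
          ((Real.hasDerivAt_cos φ).const_mul (x 1))
        refine this.congr_deriv ?_
        ring)
      (by simp) (by simp) μ |σ| (abs_pos.2 hσne)
    rw [habs, hkey]
    -- use rotation invariance and the |σ| ↔ σ symmetry of cosine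
    have hcabs : ∀ φ, Real.cos ((x 0 * Real.cos φ + x 1 * Real.sin φ) * |σ|)
        = Real.cos ((x 0 * Real.cos φ + x 1 * Real.sin φ) * σ) := by
      intro φ
      rcases abs_choice σ with h | h <;> rw [h]
      rw [mul_neg, Real.cos_neg]
    rw [intervalIntegral.integral_congr (g := fun φ =>
      Real.cos ((x 0 * Real.cos φ + x 1 * Real.sin φ) * σ)) (fun φ _ => hcabs φ)]
    rw [circ (x 0) (x 1) σ, ← norm_eq_x]
    have hπ : (2 : ℝ) * π ≠ 0 := by positivity
    field_simp
  rw [intervalIntegral.integral_congr G3]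
  -- Step 4: constants
  have : ∀ σ : ℝ, σ * ((1 / (2 * π)) * ∫ φ in (0:ℝ)..(2 * π),
        Real.cos (‖x‖ * σ * Real.sin φ)) * (2 * π)
      = (2 * π) * (σ * ((1 / (2 * π)) * ∫ φ in (0:ℝ)..(2 * π),
          Real.cos (‖x‖ * σ * Real.sin φ))) := fun σ => by ring
  simp_rw [this]
  rw [intervalIntegral.integral_const_mul]
  have hπ : π ≠ 0 := Real.pi_ne_zero
  field_simp
  apply intervalIntegral.integral_congr
  intro σ _
  simp only [mul_comm σ ‖x‖]

/-- `T_{-μ}♯ K_ρ(x) = 2 ∫_0^{1/ρ} σ J₀(‖x‖ σ) dσ`. -/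
theorem dual_of_kernel (μ ρ : ℝ) (hρ : 0 < ρ) (hμ : |μ| < 1 / ρ) (x : R2) :
    (dualERT (-μ) (fun _ s => Krho μ ρ s) x : ℂ) =
      2 * ∫ σ in (0:ℝ)..(1 / ρ), (σ : ℂ) * J0 (‖x‖ * σ) := by
  have hJ : ∀ σ : ℝ, (σ : ℂ) * J0 (‖x‖ * σ)
      = (((σ * ((1 / (2 * π)) * ∫ φ in (0:ℝ)..(2 * π),
          Real.cos (‖x‖ * σ * Real.sin φ))) : ℝ) : ℂ) := by
    intro σ
    rw [J0_eq]
    push_cast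
    ring
  simp_rw [hJ, intervalIntegral.integral_ofReal]
  rw [dual_of_kernel_real μ ρ x]
  push_cast
  ring
end
end

section
/- For every x ∈ ℝ², μ ∈ ℝ, and t ∈ ℝ with |t| ≥ |μ|, one has ∫_0^{2π} exp(−μ x·θ⊥(φ) + i t x·θ(φ)) dφ = 2π J₀(‖x‖ √(t² − μ²)). -/
open MeasureTheory Real Filter

noncomputable section

lemma int_exp_int (k : ℤ) :
    ∫ φ in (0:ℝ)..(2*π), Complex.exp ((k:ℂ) * Complex.I * φ) =
      if k = 0 then ((2*π:ℝ):ℂ) else 0 := by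
  rcases eq_or_ne k 0 with hk | hk
  · subst hk
    simp
  · rw [if_neg hk]
    have hc : (k:ℂ) * Complex.I ≠ 0 := by
      simp [Complex.ext_iff, hk, Complex.I_ne_zero]
    rw [integral_exp_mul_complex (a := 0) (b := 2*π) hc]
    have h1 : (k:ℂ) * Complex.I * ((2*π:ℝ):ℂ) = (k:ℂ) * (2 * (π:ℂ) * Complex.I) := by
      push_cast; ring
    rw [h1, Complex.exp_int_mul_two_pi_mul_I]
    simp

lemma int_pow (p q : ℂ) (n : ℕ) :
    ∫ φ in (0:ℝ)..(2*π),
        (p * Complex.exp (Complex.I * φ) + q * Complex.exp (-(Complex.I * φ)))^n =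
      if n % 2 = 0 then ((2*π:ℝ):ℂ) * (n.choose (n/2)) * (p*q)^(n/2) else 0 := by
  have key : ∀ φ : ℝ,
      (p * Complex.exp (Complex.I * φ) + q * Complex.exp (-(Complex.I * φ)))^n
      = ∑ j ∈ Finset.range (n+1),
          (p^j * q^(n-j) * (n.choose j)) *
            Complex.exp (((((j:ℤ) - ((n-j : ℕ) : ℤ)) : ℤ):ℂ) * Complex.I * φ) := by
    intro φ
    rw [add_pow]
    refine Finset.sum_congr rfl fun j hj => ?_
    have hE : Complex.exp (Complex.I * φ) ^ j * Complex.exp (-(Complex.I * φ)) ^ (n-j)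
        = Complex.exp (((((j:ℤ) - ((n-j : ℕ) : ℤ)) : ℤ):ℂ) * Complex.I * φ) := by
      rw [← Complex.exp_nat_mul, ← Complex.exp_nat_mul, ← Complex.exp_add]
      congr 1
      push_cast
      ring
    rw [mul_pow, mul_pow, mul_mul_mul_comm, hE]
    ring
  simp_rw [key]
  rw [intervalIntegral.integral_finset_sum (fun j hj => by
    apply Continuous.intervalIntegrable
    fun_prop)]
  simp_rw [intervalIntegral.integral_const_mul, int_exp_int]
  have step : ∀ j ∈ Finset.range (n+1),
      (p^j * q^(n-j) * (n.choose j)) *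
        (if ((j:ℤ) - ((n-j : ℕ) : ℤ)) = 0 then ((2*π:ℝ):ℂ) else 0)
      = if n = 2*j then ((2*π:ℝ):ℂ) * (n.choose (n/2)) * (p*q)^(n/2) else 0 := by
    intro j hj
    rw [Finset.mem_range] at hj
    rcases eq_or_ne n (2*j) with hnj | hnj
    · rw [if_pos (by omega), if_pos hnj]
      have h1 : n - j = j := by omega
      have h2 : n / 2 = j := by omega
      rw [h1, h2, mul_pow]
      ring
    · rw [if_neg (by omega), if_neg hnj, mul_zero]
  rw [Finset.sum_congr rfl step]
  rcases Nat.even_or_odd n with he | ho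
  · have h2 : n % 2 = 0 := Nat.even_iff.mp he
    rw [if_pos h2, Finset.sum_eq_single (n/2)]
    · rw [if_pos (by omega)]
    · intro j hj hne
      rw [if_neg (by rw [Finset.mem_range] at hj; omega)]
    · intro hmem
      exact absurd (Finset.mem_range.2 (by omega)) hmem
  · have h2 : n % 2 = 1 := Nat.odd_iff.mp ho
    rw [if_neg (by omega)]
    apply Finset.sum_eq_zero
    intro j hj
    rw [if_neg (by omega)]

lemma int_exp_series (p q : ℂ) :
    ∫ φ in (0:ℝ)..(2*π),
        Complex.exp (p * Complex.exp (Complex.I * φ) + q * Complex.exp (-(Complex.I * φ)))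
      = ∑' n : ℕ,
          (if n % 2 = 0 then ((2*π:ℝ):ℂ) * (n.choose (n/2)) * (p*q)^(n/2) else 0)
            / n.factorial := by
  have h0 : (0:ℝ) ≤ 2*π := by positivity
  set F : ℕ → ℝ → ℂ := fun n φ =>
    (p * Complex.exp (Complex.I * φ) + q * Complex.exp (-(Complex.I * φ)))^n / n.factorial
    with hF
  have hFc : ∀ n, Continuous (F n) := fun n => by rw [hF]; fun_prop
  have hint : ∀ n, Integrable (F n) (volume.restrict (Set.Ioc (0:ℝ) (2*π))) :=
    fun n => ((hFc n).intervalIntegrable 0 (2*π)).1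
  have hgb : ∀ φ : ℝ, ‖p * Complex.exp (Complex.I * φ) + q * Complex.exp (-(Complex.I * φ))‖
      ≤ ‖p‖ + ‖q‖ := by
    intro φ
    refine (norm_add_le _ _).trans ?_
    rw [norm_mul, norm_mul]
    have h1 : ‖Complex.exp (Complex.I * φ)‖ = 1 := by
      rw [Complex.norm_exp]; simp
    have h2 : ‖Complex.exp (-(Complex.I * φ))‖ = 1 := by
      rw [Complex.norm_exp]; simp
    rw [h1, h2, mul_one, mul_one]
  have hFb : ∀ n, ∀ φ : ℝ, ‖F n φ‖ ≤ (‖p‖ + ‖q‖)^n / n.factorial := by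
    intro n φ
    rw [hF]
    simp only
    rw [norm_div, norm_pow]
    have hfac : ‖((n.factorial : ℕ) : ℂ)‖ = (n.factorial : ℝ) := by
      simp
    rw [hfac]
    have := hgb φ
    gcongr
  have hib : ∀ n, (∫ φ, ‖F n φ‖ ∂(volume.restrict (Set.Ioc (0:ℝ) (2*π))))
      ≤ (‖p‖ + ‖q‖)^n / n.factorial * (2*π) := by
    intro n
    have hconst : Integrable (fun _ : ℝ => (‖p‖ + ‖q‖)^n / n.factorial)
        (volume.restrict (Set.Ioc (0:ℝ) (2*π))) := by
      refine integrableOn_const ?_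
      rw [Real.volume_Ioc]
      exact ENNReal.ofReal_ne_top
    calc (∫ φ, ‖F n φ‖ ∂(volume.restrict (Set.Ioc (0:ℝ) (2*π))))
        ≤ ∫ _, (‖p‖ + ‖q‖)^n / n.factorial ∂(volume.restrict (Set.Ioc (0:ℝ) (2*π))) := by
          refine integral_mono_of_nonneg (ae_of_all _ fun φ => norm_nonneg _) hconst
            (ae_of_all _ fun φ => hFb n φ)
      _ = (‖p‖ + ‖q‖)^n / n.factorial * (2*π) := by
          rw [integral_const]
          simp [Real.volume_Ioc, ENNReal.toReal_ofReal h0]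
          rw [max_eq_left (by positivity)]
          ring
  have hsum : Summable fun n => ∫ φ, ‖F n φ‖ ∂(volume.restrict (Set.Ioc (0:ℝ) (2*π))) := by
    refine Summable.of_nonneg_of_le (fun n => integral_nonneg fun φ => norm_nonneg _) hib ?_
    exact (Real.summable_pow_div_factorial _).mul_right _
  have main := hasSum_integral_of_summable_integral_norm hint hsum
  have hexpz : ∀ z : ℂ, Complex.exp z = ∑' n : ℕ, z^n / n.factorial := fun z => by
    rw [Complex.exp_eq_exp_ℂ, NormedSpace.exp_eq_tsum_div]
  have hexp : ∀ φ : ℝ,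
      Complex.exp (p * Complex.exp (Complex.I * φ) + q * Complex.exp (-(Complex.I * φ)))
      = ∑' n : ℕ, F n φ := by
    intro φ
    rw [hexpz]
  rw [intervalIntegral.integral_of_le h0]
  calc (∫ φ in Set.Ioc (0:ℝ) (2*π),
          Complex.exp (p * Complex.exp (Complex.I * φ) + q * Complex.exp (-(Complex.I * φ))))
      = ∫ φ in Set.Ioc (0:ℝ) (2*π), ∑' n : ℕ, F n φ :=
        integral_congr_ae (ae_of_all _ fun φ => hexp φ)
    _ = ∑' n : ℕ, ∫ φ in Set.Ioc (0:ℝ) (2*π), F n φ := main.tsum_eq.symm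
    _ = _ := by
        refine tsum_congr fun n => ?_
        rw [← intervalIntegral.integral_of_le h0, hF]
        simp only
        rw [intervalIntegral.integral_div, int_pow]

/-- `∫_0^{2π} exp(-μ x·θ⊥(φ) + i t x·θ(φ)) dφ = 2π J₀(‖x‖ √(t² - μ²))`. -/
theorem circle_integral_eq_bessel (x : R2) (μ t : ℝ) (h : |μ| ≤ |t|) :
    (∫ φ in (0:ℝ)..(2 * π),
        Complex.exp ((-(μ * dot x (thetaPerp φ)) : ℝ) + Complex.I * (t * dot x (theta φ) : ℝ)))
      = (2 * π : ℝ) * J0 (‖x‖ * Real.sqrt (t ^ 2 - μ ^ 2)) := by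
  set r : ℝ := ‖x‖ * Real.sqrt (t ^ 2 - μ ^ 2) with hr
  have hsub : (0:ℝ) ≤ t^2 - μ^2 := by
    have h1 := sq_abs t
    have h2 := sq_abs μ
    nlinarith [abs_nonneg μ, abs_nonneg t]
  set p : ℂ := (t - μ) * ((x 1 : ℝ) + Complex.I * (x 0 : ℝ)) / 2 with hp
  set q : ℂ := (t + μ) * (Complex.I * (x 0 : ℝ) - (x 1 : ℝ)) / 2 with hq
  have hdot1 : ∀ φ : ℝ, dot x (theta φ) = x 0 * Real.cos φ + x 1 * Real.sin φ := by
    intro φ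
    simp [dot, theta, PiLp.inner_apply, Fin.sum_univ_two, WithLp.equiv_symm_apply, PiLp.toLp_apply,
      RCLike.inner_apply, conj_trivial]
    ring
  have hdot2 : ∀ φ : ℝ, dot x (thetaPerp φ) = -(x 0 * Real.sin φ) + x 1 * Real.cos φ := by
    intro φ
    simp [dot, thetaPerp, PiLp.inner_apply, Fin.sum_univ_two, WithLp.equiv_symm_apply, PiLp.toLp_apply,
      RCLike.inner_apply, conj_trivial]
    ring
  have hE : ∀ φ : ℝ, Complex.exp (Complex.I * φ)
      = (Real.cos φ : ℂ) + (Real.sin φ : ℂ) * Complex.I := by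
    intro φ
    rw [mul_comm, Complex.exp_mul_I, Complex.ofReal_cos, Complex.ofReal_sin]
  have hE' : ∀ φ : ℝ, Complex.exp (-(Complex.I * φ))
      = (Real.cos φ : ℂ) - (Real.sin φ : ℂ) * Complex.I := by
    intro φ
    have h1 : -(Complex.I * (φ:ℝ)) = ((-φ : ℝ) : ℂ) * Complex.I := by push_cast; ring
    rw [h1, Complex.exp_mul_I, ← Complex.ofReal_cos, ← Complex.ofReal_sin,
      Real.cos_neg, Real.sin_neg]
    push_cast
    ring
  have hL : ∀ φ : ℝ,
      ((-(μ * dot x (thetaPerp φ)) : ℝ) : ℂ) + Complex.I * ((t * dot x (theta φ) : ℝ) : ℂ)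
      = p * Complex.exp (Complex.I * φ) + q * Complex.exp (-(Complex.I * φ)) := by
    intro φ
    rw [hE φ, hE' φ, hdot1 φ, hdot2 φ, hp, hq]
    push_cast
    linear_combination ((μ:ℂ) * (x 0) * Complex.sin φ) * Complex.I_sq
  have hR : ∀ φ : ℝ, Complex.I * ((r * Real.sin φ : ℝ) : ℂ)
      = ((r:ℂ)/2) * Complex.exp (Complex.I * φ) + (-(r:ℂ)/2) * Complex.exp (-(Complex.I * φ)) := by
    intro φ
    rw [hE φ, hE' φ]
    push_cast
    ring
  have hnorm : ‖x‖^2 = (x 0)^2 + (x 1)^2 := by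
    rw [← real_inner_self_eq_norm_sq]
    simp only [PiLp.inner_apply, Fin.sum_univ_two, RCLike.inner_apply, conj_trivial]
    ring
  have hr2 : (r:ℂ)^2 = (((x 0 : ℝ) : ℂ))^2 * ((t:ℂ)^2 - (μ:ℂ)^2)
      + (((x 1 : ℝ) : ℂ))^2 * ((t:ℂ)^2 - (μ:ℂ)^2) := by
    have : r^2 = ((x 0)^2 + (x 1)^2) * (t^2 - μ^2) := by
      rw [hr, mul_pow, Real.sq_sqrt hsub, hnorm]
    calc (r:ℂ)^2 = ((r^2 : ℝ) : ℂ) := by push_cast; ring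
      _ = _ := by rw [this]; push_cast; ring
  have hpq : p * q = ((r:ℂ)/2) * (-(r:ℂ)/2) := by
    rw [hp, hq]
    linear_combination (((t:ℂ)^2 - (μ:ℂ)^2) * ((x 0 : ℝ):ℂ)^2 / 4) * Complex.I_sq
      + (1/4 : ℂ) * hr2
  have hπ : (π : ℝ) ≠ 0 := Real.pi_ne_zero
  have hJ : ((2*π : ℝ) : ℂ) * J0 r
      = ∫ φ in (0:ℝ)..(2*π), Complex.exp (Complex.I * ((r * Real.sin φ : ℝ) : ℂ)) := by
    rw [J0, ← mul_assoc, ← Complex.ofReal_mul]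
    have : (2*π) * (1/(2*π)) = (1:ℝ) := by field_simp
    rw [this, Complex.ofReal_one, one_mul]
  rw [hJ]
  calc (∫ φ in (0:ℝ)..(2 * π),
        Complex.exp ((-(μ * dot x (thetaPerp φ)) : ℝ) + Complex.I * (t * dot x (theta φ) : ℝ)))
      = ∫ φ in (0:ℝ)..(2 * π),
          Complex.exp (p * Complex.exp (Complex.I * φ) + q * Complex.exp (-(Complex.I * φ))) := by
        refine intervalIntegral.integral_congr fun φ _ => ?_
        rw [hL φ]
    _ = ∫ φ in (0:ℝ)..(2 * π),
          Complex.exp (((r:ℂ)/2) * Complex.exp (Complex.I * φ)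
            + (-(r:ℂ)/2) * Complex.exp (-(Complex.I * φ))) := by
        rw [int_exp_series, int_exp_series, hpq]
    _ = _ := by
        refine intervalIntegral.integral_congr fun φ _ => ?_
        rw [hR φ]
end
end

section
/- Let μ ∈ ℝ, let f : ℝ² → ℝ be bounded and measurable, vanishing outside the closed unit ball B₁, and let g : [0, 2π) × ℝ → ℝ be bounded and measurable with g(φ, ·) supported in a fixed compact set for all φ. Then for every x ∈ ℝ², T_{−μ}♯ (g ⋆ T_μ f)(x) = ((T_{−μ}♯ g) ⋆ f)(x), where on the right-hand side ⋆ denotes convolution on ℝ², i.e. ((T_{−μ}♯ g) ⋆ f)(x) = ∫_{ℝ²} T_{−μ}♯ g(x − y) f(y) dy. -/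
open MeasureTheory Real Filter

noncomputable section

/-- The exponential Radon transform
`T_μ f(φ, s) = ∫ e^{μ t} f(s θ(φ) + t θ⊥(φ)) dt`. -/
def ERT (μ : ℝ) (f : R2 → ℝ) (φ s : ℝ) : ℝ :=
  ∫ t : ℝ, Real.exp (μ * t) * f (s • theta φ + t • thetaPerp φ)

/-- Convolution in the second variable on the cylinder. -/
def convZ (g h : ℝ → ℝ → ℝ) (φ s : ℝ) : ℝ := ∫ t : ℝ, g φ (s - t) * h φ t


open Function

lemma dot_eq (x y : R2) : dot x y = x 0 * y 0 + x 1 * y 1 := by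
  simp [dot, PiLp.inner_apply, Fin.sum_univ_two, mul_comm]
lemma dot_theta_theta (φ : ℝ) : dot (theta φ) (theta φ) = 1 := by
  simp [dot_eq, theta]; nlinarith [sin_sq_add_cos_sq φ]
lemma dot_theta_perp (φ : ℝ) : dot (theta φ) (thetaPerp φ) = 0 := by
  simp [dot_eq, theta, thetaPerp]; ring
lemma dot_perp_perp (φ : ℝ) : dot (thetaPerp φ) (thetaPerp φ) = 1 := by
  simp [dot_eq, theta, thetaPerp]; nlinarith [sin_sq_add_cos_sq φ]

def rotL (φ : ℝ) : R2 →ₗ[ℝ] R2 :=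
  ((EuclideanSpace.proj (0:Fin 2) : R2 →L[ℝ] ℝ).toLinearMap).smulRight (theta φ) +
  ((EuclideanSpace.proj (1:Fin 2) : R2 →L[ℝ] ℝ).toLinearMap).smulRight (thetaPerp φ)

lemma rotL_apply (φ : ℝ) (v : R2) : rotL φ v = v 0 • theta φ + v 1 • thetaPerp φ := rfl

lemma rotL_inner (φ : ℝ) (v w : R2) : (inner ℝ (rotL φ v) (rotL φ w) : ℝ) = inner ℝ v w := by
  have e1 := dot_theta_theta φ; have e2 := dot_theta_perp φ; have e3 := dot_perp_perp φ
  have hc : dot (thetaPerp φ) (theta φ) = 0 := by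
    rw [dot, real_inner_comm]; exact dot_theta_perp φ
  simp only [dot] at e1 e2 e3 hc
  rw [rotL_apply, rotL_apply]
  simp only [inner_add_left, inner_add_right, real_inner_smul_left, real_inner_smul_right,
    e1, e2, e3, hc]
  rw [show (inner ℝ v w : ℝ) = dot v w from rfl, dot_eq]
  ring

def rotIso (φ : ℝ) : R2 ≃ₗᵢ[ℝ] R2 :=
  ((rotL φ).isometryOfInner (rotL_inner φ)).toLinearIsometryEquiv rfl

def planeEquiv (φ : ℝ) : (ℝ × ℝ) ≃ᵐ R2 :=
  (MeasurableEquiv.finTwoArrow.symm.trans (MeasurableEquiv.toLp 2 (Fin 2 → ℝ))).trans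
    (rotIso φ).toHomeomorph.toMeasurableEquiv

lemma planeEquiv_apply (φ : ℝ) (p : ℝ × ℝ) :
    planeEquiv φ p = p.1 • theta φ + p.2 • thetaPerp φ := by
  show rotL φ ((WithLp.equiv 2 _).symm ![p.1, p.2]) = _
  rw [rotL_apply]; rfl

lemma planeEquiv_mp (φ : ℝ) : MeasurePreserving (planeEquiv φ) volume volume := by
  exact (rotIso φ).measurePreserving.comp
    (((EuclideanSpace.volume_preserving_symm_measurableEquiv_toLp (Fin 2)).symm).comp
      (volume_preserving_finTwoArrow ℝ).symm)

lemma continuous_theta : Continuous theta := by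
  apply Continuous.comp (PiLp.continuous_toLp 2 (fun _ : Fin 2 => ℝ))
  exact continuous_pi fun i => by fin_cases i <;> simp <;> fun_prop

lemma continuous_thetaPerp : Continuous thetaPerp := by
  apply Continuous.comp (PiLp.continuous_toLp 2 (fun _ : Fin 2 => ℝ))
  exact continuous_pi fun i => by fin_cases i <;> simp <;> fun_prop

lemma dot_comm (x y : R2) : dot x y = dot y x := real_inner_comm y x

lemma dot_combo_theta (φ t u : ℝ) : dot (t • theta φ + u • thetaPerp φ) (theta φ) = t := by
  have h1 := dot_theta_theta φ
  have h2 : dot (thetaPerp φ) (theta φ) = 0 := by rw [dot_comm]; exact dot_theta_perp φ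
  unfold dot at *
  rw [inner_add_left, real_inner_smul_left, real_inner_smul_left, h1, h2]; ring

lemma dot_combo_perp (φ t u : ℝ) : dot (t • theta φ + u • thetaPerp φ) (thetaPerp φ) = u := by
  have h1 := dot_perp_perp φ
  have h2 := dot_theta_perp φ
  unfold dot at *
  rw [inner_add_left, real_inner_smul_left, real_inner_smul_left, h1, h2]; ring

lemma norm_theta (φ : ℝ) : ‖theta φ‖ = 1 := by
  have h := dot_theta_theta φ
  unfold dot at h
  rw [real_inner_self_eq_norm_mul_norm] at h
  nlinarith [norm_nonneg (theta φ)]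

lemma norm_thetaPerp (φ : ℝ) : ‖thetaPerp φ‖ = 1 := by
  have h := dot_perp_perp φ
  unfold dot at h
  rw [real_inner_self_eq_norm_mul_norm] at h
  nlinarith [norm_nonneg (thetaPerp φ)]

lemma abs_dot_theta_le (y : R2) (φ : ℝ) : |dot y (theta φ)| ≤ ‖y‖ := by
  have := abs_real_inner_le_norm y (theta φ)
  rwa [norm_theta, mul_one] at this

lemma abs_dot_perp_le (y : R2) (φ : ℝ) : |dot y (thetaPerp φ)| ≤ ‖y‖ := by
  have := abs_real_inner_le_norm y (thetaPerp φ)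
  rwa [norm_thetaPerp, mul_one] at this

lemma norm_combo_sq (φ t u : ℝ) : ‖t • theta φ + u • thetaPerp φ‖ ^ 2 = t ^ 2 + u ^ 2 := by
  have h1 := dot_theta_theta φ
  have h2 := dot_theta_perp φ
  have h3 := dot_perp_perp φ
  have h4 : dot (thetaPerp φ) (theta φ) = 0 := by rw [dot_comm]; exact dot_theta_perp φ
  unfold dot at *
  rw [← real_inner_self_eq_norm_sq]
  rw [inner_add_left, inner_add_right, inner_add_right, real_inner_smul_left,
    real_inner_smul_left, real_inner_smul_left, real_inner_smul_left,
    real_inner_smul_right, real_inner_smul_right, real_inner_smul_right,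
    real_inner_smul_right, h1, h2, h3, h4]
  ring

lemma integral_plane (φ : ℝ) (F : R2 → ℝ)
    (hF : Integrable (fun p : ℝ × ℝ => F (p.1 • theta φ + p.2 • thetaPerp φ))) :
    (∫ t : ℝ, ∫ u : ℝ, F (t • theta φ + u • thetaPerp φ)) = ∫ y : R2, F y := by
  have h1 : Integrable (uncurry fun t u : ℝ => F (t • theta φ + u • thetaPerp φ))
      (volume.prod volume) := by
    rw [← Measure.volume_eq_prod]; exact hF
  rw [MeasureTheory.integral_integral h1, ← Measure.volume_eq_prod]
  have := (planeEquiv_mp φ).integral_comp' F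
  simp only [planeEquiv_apply] at this
  exact this

section Step1
variable (μ : ℝ) (f : R2 → ℝ) (hfm : Measurable f)
    (Mf : ℝ) (hfb : ∀ x : R2, |f x| ≤ Mf)
    (hfsupp : ∀ x : R2, x ∉ Metric.closedBall (0 : R2) 1 → f x = 0)
    (g : ℝ → ℝ → ℝ) (hgm : Measurable (Function.uncurry g))
    (Mg : ℝ) (hgb : ∀ φ s : ℝ, |g φ s| ≤ Mg)

include hfm hfb hfsupp hgm hgb in
lemma step1 (φ s : ℝ) :
    convZ g (ERT μ f) φ s
      = ∫ y : R2, g φ (s - dot y (theta φ)) * (Real.exp (μ * dot y (thetaPerp φ)) * f y) := by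
  have hMf : 0 ≤ Mf := le_trans (abs_nonneg _) (hfb 0)
  have hMg : 0 ≤ Mg := le_trans (abs_nonneg _) (hgb 0 0)
  -- integrability of the integrand on ℝ × ℝ
  have hint : Integrable (fun p : ℝ × ℝ =>
      g φ (s - p.1) * (Real.exp (μ * p.2) * f (p.1 • theta φ + p.2 • thetaPerp φ))) := by
    have hmeas : Measurable (fun p : ℝ × ℝ =>
        g φ (s - p.1) * (Real.exp (μ * p.2) * f (p.1 • theta φ + p.2 • thetaPerp φ))) := by
      apply Measurable.mul
      · exact hgm.comp (measurable_const.prodMk (measurable_const.sub measurable_fst))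
      · apply Measurable.mul
        · exact (Real.continuous_exp.comp (continuous_const.mul continuous_snd)).measurable
        · exact hfm.comp ((continuous_fst.smul continuous_const).add
            (continuous_snd.smul continuous_const)).measurable
    refine Integrable.mono' (g := (Metric.closedBall (0 : ℝ × ℝ) 1).indicator
        (fun _ => Mg * (Real.exp |μ| * Mf))) ?_ hmeas.aestronglyMeasurable ?_
    · rw [integrable_indicator_iff measurableSet_closedBall]
      exact integrableOn_const (ne_of_lt
        ((isCompact_closedBall _ _).measure_lt_top))
    · refine ae_of_all _ fun p => ?_
      by_cases hp : p ∈ Metric.closedBall (0 : ℝ × ℝ) 1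
      · rw [Set.indicator_of_mem hp]
        have hp2 : |p.2| ≤ 1 := by
          rw [Metric.mem_closedBall, dist_zero_right, Prod.norm_def] at hp
          calc |p.2| = ‖p.2‖ := (Real.norm_eq_abs _).symm
            _ ≤ max ‖p.1‖ ‖p.2‖ := le_max_right _ _
            _ ≤ 1 := hp
        have he : Real.exp (μ * p.2) ≤ Real.exp |μ| := by
          apply Real.exp_le_exp.2
          calc μ * p.2 ≤ |μ * p.2| := le_abs_self _
            _ = |μ| * |p.2| := abs_mul _ _
            _ ≤ |μ| * 1 := by nlinarith [abs_nonneg μ]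
            _ = |μ| := mul_one _
        rw [Real.norm_eq_abs, abs_mul, abs_mul]
        apply mul_le_mul (hgb _ _) _ (by positivity) hMg
        apply mul_le_mul _ (hfb _) (abs_nonneg _) (Real.exp_pos _).le
        rwa [abs_of_pos (Real.exp_pos _)]
      · rw [Set.indicator_of_notMem hp]
        have hf0 : f (p.1 • theta φ + p.2 • thetaPerp φ) = 0 := by
          apply hfsupp
          rw [Metric.mem_closedBall, dist_zero_right, not_le, Prod.norm_def, lt_max_iff,
            Real.norm_eq_abs, Real.norm_eq_abs] at hp
          simp only [Metric.mem_closedBall, dist_zero_right, not_le]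
          have hsq := norm_combo_sq φ p.1 p.2
          rcases hp with hp | hp <;>
            nlinarith [norm_nonneg (p.1 • theta φ + p.2 • thetaPerp φ), sq_nonneg p.1,
              sq_nonneg p.2, abs_nonneg p.1, abs_nonneg p.2, sq_abs p.1, sq_abs p.2]
        rw [hf0]; simp
  have h1 : convZ g (ERT μ f) φ s = ∫ t : ℝ, ∫ u : ℝ,
      g φ (s - t) * (Real.exp (μ * u) * f (t • theta φ + u • thetaPerp φ)) := by
    unfold convZ ERT
    simp_rw [integral_const_mul]
  rw [h1]
  have h2 := integral_plane φ
    (fun y => g φ (s - dot y (theta φ)) * (Real.exp (μ * dot y (thetaPerp φ)) * f y))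
    (by simpa only [dot_combo_theta, dot_combo_perp] using hint)
  simp only [dot_combo_theta, dot_combo_perp] at h2
  exact h2
end Step1


/-- `T_{-μ}♯ (g ⋆ T_μ f) = (T_{-μ}♯ g) ⋆ f`, where the right-hand
convolution is on `ℝ²`. -/
theorem dual_conv_eq_conv_dual (μ : ℝ) (f : R2 → ℝ) (hfm : Measurable f)
    (Mf : ℝ) (hfb : ∀ x : R2, |f x| ≤ Mf)
    (hfsupp : ∀ x : R2, x ∉ Metric.closedBall (0 : R2) 1 → f x = 0)
    (g : ℝ → ℝ → ℝ) (hgm : Measurable (Function.uncurry g))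
    (Mg : ℝ) (hgb : ∀ φ s : ℝ, |g φ s| ≤ Mg)
    (K : Set ℝ) (hK : IsCompact K) (hgsupp : ∀ φ s : ℝ, s ∉ K → g φ s = 0)
    (x : R2) :
    dualERT (-μ) (convZ g (ERT μ f)) x = ∫ y : R2, dualERT (-μ) g (x - y) * f y := by
  have hMf : 0 ≤ Mf := le_trans (abs_nonneg _) (hfb 0)
  have hMg : 0 ≤ Mg := le_trans (abs_nonneg _) (hgb 0 0)
  have hπ : (0:ℝ) ≤ 2 * π := by positivity
  set E : ℝ → R2 → ℝ := fun φ y =>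
    Real.exp (-μ * dot (x - y) (thetaPerp φ)) * g φ (dot (x - y) (theta φ)) * f y with hE
  have key : ∀ φ : ℝ,
      Real.exp (-μ * dot x (thetaPerp φ)) * convZ g (ERT μ f) φ (dot x (theta φ))
        = ∫ y : R2, E φ y := by
    intro φ
    rw [step1 μ f hfm Mf hfb hfsupp g hgm Mg hgb φ (dot x (theta φ)), ← integral_const_mul]
    refine integral_congr_ae (ae_of_all _ fun y => ?_)
    have hsub : dot (x - y) (theta φ) = dot x (theta φ) - dot y (theta φ) :=
      inner_sub_left _ _ _
    have hsub' : dot (x - y) (thetaPerp φ) = dot x (thetaPerp φ) - dot y (thetaPerp φ) :=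
      inner_sub_left _ _ _
    simp only [hE]
    rw [hsub, hsub', show -μ * (dot x (thetaPerp φ) - dot y (thetaPerp φ))
        = -μ * dot x (thetaPerp φ) + μ * dot y (thetaPerp φ) by ring, Real.exp_add]
    ring
  -- integrability for Fubini
  have hInt : Integrable (uncurry E)
      ((volume.restrict (Set.Ioc (0:ℝ) (2 * π))).prod volume) := by
    have hmeas : Measurable (uncurry E) := by
      have hd1 : Continuous fun p : ℝ × R2 => dot (x - p.2) (thetaPerp p.1) := by
        apply Continuous.inner (continuous_const.sub continuous_snd)
          (continuous_thetaPerp.comp continuous_fst)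
      have hd2 : Continuous fun p : ℝ × R2 => dot (x - p.2) (theta p.1) := by
        apply Continuous.inner (continuous_const.sub continuous_snd)
          (continuous_theta.comp continuous_fst)
      refine Measurable.mul (Measurable.mul ?_ ?_) (hfm.comp measurable_snd)
      · exact (Real.continuous_exp.comp (continuous_const.mul hd1)).measurable
      · exact hgm.comp (measurable_fst.prodMk hd2.measurable)
    set C : ℝ := Real.exp (|μ| * (‖x‖ + 1)) * Mg * Mf with hC
    refine Integrable.mono' (g := fun p : ℝ × R2 =>
      (Set.univ ×ˢ Metric.closedBall (0:R2) 1).indicator (fun _ => C) p) ?_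
      hmeas.aestronglyMeasurable ?_
    · rw [integrable_indicator_iff (MeasurableSet.univ.prod measurableSet_closedBall)]
      refine integrableOn_const (ne_of_lt ?_)
      rw [Measure.prod_prod, Measure.restrict_apply_univ]
      exact ENNReal.mul_lt_top measure_Ioc_lt_top
        (isCompact_closedBall _ _).measure_lt_top
    · refine ae_of_all _ fun p => ?_
      by_cases hp : p.2 ∈ Metric.closedBall (0:R2) 1
      · have hpmem : p ∈ Set.univ ×ˢ Metric.closedBall (0:R2) 1 :=
          Set.mem_prod.2 ⟨Set.mem_univ _, hp⟩
        show ‖uncurry E p‖ ≤ (Set.univ ×ˢ Metric.closedBall (0:R2) 1).indicator (fun _ => C) p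
        rw [Set.indicator_of_mem hpmem]
        have hy1 : ‖p.2‖ ≤ 1 := mem_closedBall_zero_iff.1 hp
        have hdb : |dot (x - p.2) (thetaPerp p.1)| ≤ ‖x‖ + 1 := by
          refine le_trans (abs_dot_perp_le _ _) (le_trans (norm_sub_le _ _) ?_)
          linarith
        have hexp : Real.exp (-μ * dot (x - p.2) (thetaPerp p.1))
            ≤ Real.exp (|μ| * (‖x‖ + 1)) := by
          apply Real.exp_le_exp.2
          calc -μ * dot (x - p.2) (thetaPerp p.1) ≤ |(-μ) * dot (x - p.2) (thetaPerp p.1)| :=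
              le_abs_self _
            _ = |μ| * |dot (x - p.2) (thetaPerp p.1)| := by rw [abs_mul, abs_neg]
            _ ≤ |μ| * (‖x‖ + 1) := by
                exact mul_le_mul_of_nonneg_left hdb (abs_nonneg μ)
        simp only [uncurry, hE, Real.norm_eq_abs, abs_mul]
        rw [abs_of_pos (Real.exp_pos _), hC]
        apply mul_le_mul _ (hfb _) (abs_nonneg _) (by positivity)
        exact mul_le_mul hexp (hgb _ _) (abs_nonneg _) (Real.exp_pos _).le
      · show ‖uncurry E p‖ ≤ (Set.univ ×ˢ Metric.closedBall (0:R2) 1).indicator (fun _ => C) p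
        rw [Set.indicator_of_notMem (fun hmem => hp (Set.mem_prod.1 hmem).2)]
        have : f p.2 = 0 := hfsupp _ hp
        simp only [hE, uncurry, this, mul_zero, norm_zero]
        positivity
  -- main computation
  rw [show dualERT (-μ) (convZ g (ERT μ f)) x = ∫ φ in (0:ℝ)..(2*π),
      Real.exp (-μ * dot x (thetaPerp φ)) * convZ g (ERT μ f) φ (dot x (theta φ)) from rfl]
  calc (∫ φ in (0:ℝ)..(2*π),
        Real.exp (-μ * dot x (thetaPerp φ)) * convZ g (ERT μ f) φ (dot x (theta φ)))
      = ∫ φ in (0:ℝ)..(2*π), ∫ y : R2, E φ y :=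
        intervalIntegral.integral_congr fun φ _ => key φ
    _ = ∫ φ in Set.Ioc (0:ℝ) (2*π), ∫ y : R2, E φ y :=
        intervalIntegral.integral_of_le hπ
    _ = ∫ y : R2, ∫ φ in Set.Ioc (0:ℝ) (2*π), E φ y := integral_integral_swap hInt
    _ = ∫ y : R2, dualERT (-μ) g (x - y) * f y := by
        refine integral_congr_ae (ae_of_all _ fun y => ?_)
        show (∫ φ in Set.Ioc (0:ℝ) (2*π), E φ y)
            = (∫ φ in (0:ℝ)..(2*π),
                Real.exp (-μ * dot (x - y) (thetaPerp φ)) * g φ (dot (x - y) (theta φ))) * f y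
        rw [intervalIntegral.integral_of_le hπ, ← integral_mul_const]
end
end

section
/- Let β > 1, L > 0, η₀ ∈ H(β, L), x₀ ∈ ℝ², and let A, h be real numbers with 0 < A ≤ 1, 0 < h ≤ 1, and ‖x₀‖ + h ≤ 1. Define f₁(x) = A h^{β−1} η₀((x − x₀)/h). Then f₁ ∈ H(β, L). -/
open MeasureTheory Real Filter

noncomputable section

/-- The Fourier transform `f̃(ξ) = ∫_{ℝ²} f(x) e^{-i ξ·x} dx`. -/
def FT (f : R2 → ℝ) (ξ : R2) : ℂ :=
  ∫ x : R2, (f x : ℂ) * Complex.exp (-Complex.I * (dot ξ x : ℂ))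

/-- The class `H(β, L)`: functions vanishing outside the closed unit ball whose
Fourier transform satisfies `∫ (1 + ‖ξ‖²)^β |f̃(ξ)|² dξ ≤ L`. -/
def HClass (β L : ℝ) (f : R2 → ℝ) : Prop :=
  (∀ x : R2, x ∉ Metric.closedBall (0 : R2) 1 → f x = 0) ∧
  ∫ ξ : R2, (1 + ‖ξ‖ ^ 2) ^ β * ‖FT f ξ‖ ^ 2 ≤ L

/-- Change of variables for the Fourier transform of a dilated translate. -/
theorem FT_scaled (η₀ : R2 → ℝ) (x₀ : R2) (c h : ℝ) (hh : 0 < h) (ξ : R2) :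
    FT (fun x => c * η₀ (h⁻¹ • (x - x₀))) ξ
      = (c * h ^ 2 : ℝ) * (Complex.exp (-Complex.I * (dot ξ x₀ : ℂ)) * FT η₀ (h • ξ)) := by
  unfold FT
  have step1 : ∀ x : R2, ((c * η₀ (h⁻¹ • (x - x₀)) : ℝ) : ℂ) * Complex.exp (-Complex.I * (dot ξ x : ℂ))
      = (c : ℂ) * ((η₀ (h⁻¹ • (x - x₀)) : ℂ) * Complex.exp (-Complex.I * (dot ξ x : ℂ))) := by
    intro x; push_cast; ring
  simp_rw [step1]
  rw [integral_const_mul]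
  set G : R2 → ℂ := fun y => (η₀ (h⁻¹ • y) : ℂ) * Complex.exp (-Complex.I * (dot ξ (y + x₀) : ℂ)) with hG
  have step2 : (∫ x : R2, (η₀ (h⁻¹ • (x - x₀)) : ℂ) * Complex.exp (-Complex.I * (dot ξ x : ℂ)))
      = ∫ x : R2, G (x - x₀) := by
    congr 1; ext x; simp [hG]
  rw [step2, integral_sub_right_eq_self G x₀]
  set K : R2 → ℂ := fun u => ((η₀ u : ℂ) * Complex.exp (-Complex.I * (dot (h • ξ) u : ℂ))) *
      Complex.exp (-Complex.I * (dot ξ x₀ : ℂ)) with hK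
  have step3 : ∀ y : R2, G y = K (h⁻¹ • y) := by
    intro y
    simp only [hG, hK]
    have h2 : dot (h • ξ) (h⁻¹ • y) = dot ξ y := by
      simp only [dot, inner_smul_left, inner_smul_right, RCLike.conj_to_real]
      field_simp
    rw [h2]
    have h3 : dot ξ (y + x₀) = dot ξ y + dot ξ x₀ := by simp [dot, inner_add_right]
    rw [h3]
    push_cast
    rw [mul_add, Complex.exp_add]
    ring
  simp_rw [step3]
  rw [MeasureTheory.Measure.integral_comp_inv_smul volume K h, integral_mul_const]
  have : Module.finrank ℝ R2 = 2 := finrank_euclideanSpace_fin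
  rw [this]
  rw [abs_of_nonneg (pow_nonneg hh.le 2)]
  rw [Complex.real_smul]
  push_cast
  ring

/-- if `η₀ ∈ H(β, L)`, `0 < A ≤ 1`, `0 < h ≤ 1` and `‖x₀‖ + h ≤ 1`, then
`f₁(x) = A h^{β-1} η₀((x - x₀)/h)` belongs to `H(β, L)`. -/
theorem scaled_bump_mem_HClass (β L : ℝ) (hβ : 1 < β) (hL : 0 < L)
    (η₀ : R2 → ℝ) (hη₀ : HClass β L η₀) (x₀ : R2) (A h : ℝ)
    (hA : 0 < A) (hA1 : A ≤ 1) (hh : 0 < h) (hh1 : h ≤ 1) (hx₀ : ‖x₀‖ + h ≤ 1) :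
    HClass β L (fun x : R2 => A * h ^ (β - 1) * η₀ (h⁻¹ • (x - x₀))) := by
  obtain ⟨hsupp, hint⟩ := hη₀
  have hβ0 : 0 ≤ β := by linarith
  constructor
  · intro x hx
    have hx1 : (1 : ℝ) < ‖x‖ := by
      simpa [Metric.mem_closedBall, dist_zero_right, not_le] using hx
    have hmem : h⁻¹ • (x - x₀) ∉ Metric.closedBall (0 : R2) 1 := by
      simp only [Metric.mem_closedBall, dist_zero_right, not_le]
      rw [norm_smul, norm_inv, Real.norm_eq_abs, abs_of_pos hh, inv_mul_eq_div, one_lt_div hh]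
      have := norm_sub_norm_le x x₀
      linarith
    show A * h ^ (β - 1) * η₀ (h⁻¹ • (x - x₀)) = 0
    rw [hsupp _ hmem, mul_zero]
  · set c : ℝ := A * h ^ (β - 1) with hc
    have hc0 : 0 < c := mul_pos hA (Real.rpow_pos_of_pos hh _)
    have habs : ∀ ξ : R2, ‖FT (fun x => c * η₀ (h⁻¹ • (x - x₀))) ξ‖
        = (c * h ^ 2) * ‖FT η₀ (h • ξ)‖ := by
      intro ξ
      rw [FT_scaled η₀ x₀ c h hh ξ]
      rw [norm_mul, norm_mul, Complex.norm_real, Real.norm_eq_abs, Complex.norm_exp]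
      have hre : (-Complex.I * ((dot ξ x₀ : ℝ) : ℂ)).re = 0 := by simp
      rw [hre, Real.exp_zero, one_mul, abs_of_pos (mul_pos hc0 (pow_pos hh 2))]
    set Ψ : R2 → ℝ := fun ζ => (h ^ 2 + ‖ζ‖ ^ 2) ^ β * ‖FT η₀ ζ‖ ^ 2 with hΨ
    have key : (∫ ξ : R2, (1 + ‖ξ‖ ^ 2) ^ β *
          ‖FT (fun x => c * η₀ (h⁻¹ • (x - x₀))) ξ‖ ^ 2)
        = A ^ 2 * ∫ ζ : R2, Ψ ζ := by
      have hpow : (h ^ (β - 1)) ^ 2 * (h ^ 2) ^ 2 = h ^ 2 * (h ^ 2) ^ β := by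
        rw [← Real.rpow_natCast h 2, ← Real.rpow_natCast (h ^ (β - 1)) 2,
            ← Real.rpow_natCast (h ^ ((2 : ℕ) : ℝ)) 2,
            ← Real.rpow_mul hh.le, ← Real.rpow_mul hh.le, ← Real.rpow_mul hh.le,
            ← Real.rpow_add hh, ← Real.rpow_add hh]
        congr 1
        push_cast
        ring
      have e1 : ∀ ξ : R2, (1 + ‖ξ‖ ^ 2) ^ β *
            ‖FT (fun x => c * η₀ (h⁻¹ • (x - x₀))) ξ‖ ^ 2
          = (A ^ 2 * h ^ 2) * Ψ (h • ξ) := by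
        intro ξ
        rw [habs ξ, mul_pow]
        have hn : ‖h • ξ‖ ^ 2 = h ^ 2 * ‖ξ‖ ^ 2 := by
          rw [norm_smul, Real.norm_eq_abs, mul_pow, sq_abs]
        have e2 : (h ^ 2 + ‖h • ξ‖ ^ 2) ^ β = (h ^ 2) ^ β * (1 + ‖ξ‖ ^ 2) ^ β := by
          rw [hn, show h ^ 2 + h ^ 2 * ‖ξ‖ ^ 2 = h ^ 2 * (1 + ‖ξ‖ ^ 2) by ring]
          exact Real.mul_rpow (sq_nonneg h) (by positivity)
        simp only [hΨ]
        rw [e2, hc, mul_pow, mul_pow]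
        rw [show A ^ 2 * (h ^ (β - 1)) ^ 2 * (h ^ 2) ^ 2
            = A ^ 2 * ((h ^ (β - 1)) ^ 2 * (h ^ 2) ^ 2) by ring, hpow]
        ring
      simp_rw [e1]
      rw [integral_const_mul]
      rw [MeasureTheory.Measure.integral_comp_smul volume Ψ h]
      have hfr : Module.finrank ℝ R2 = 2 := finrank_euclideanSpace_fin
      rw [hfr, smul_eq_mul, abs_inv, abs_of_nonneg (pow_nonneg hh.le 2)]
      field_simp
    rw [key]
    by_cases hm : AEStronglyMeasurable η₀ (volume : Measure R2)
    · by_cases hI : Integrable (fun ζ : R2 => (1 + ‖ζ‖ ^ 2) ^ β * ‖FT η₀ ζ‖ ^ 2)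
          (volume : Measure R2)
      · have mono : (∫ ζ : R2, Ψ ζ)
            ≤ ∫ ζ : R2, (1 + ‖ζ‖ ^ 2) ^ β * ‖FT η₀ ζ‖ ^ 2 := by
          apply integral_mono_of_nonneg (ae_of_all _ fun ζ => by positivity) hI
          refine ae_of_all _ fun ζ => ?_
          have hle : (h ^ 2 + ‖ζ‖ ^ 2) ^ β ≤ (1 + ‖ζ‖ ^ 2) ^ β :=
            Real.rpow_le_rpow (by positivity) (by nlinarith) hβ0
          exact mul_le_mul_of_nonneg_right hle (by positivity)
        have hΨnn : 0 ≤ ∫ ζ : R2, Ψ ζ := integral_nonneg fun ζ => by positivity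
        have hA2 : A ^ 2 ≤ 1 := by nlinarith
        calc A ^ 2 * ∫ ζ : R2, Ψ ζ ≤ 1 * ∫ ζ : R2, Ψ ζ :=
              mul_le_mul_of_nonneg_right hA2 hΨnn
          _ = ∫ ζ : R2, Ψ ζ := one_mul _
          _ ≤ ∫ ζ : R2, (1 + ‖ζ‖ ^ 2) ^ β * ‖FT η₀ ζ‖ ^ 2 := mono
          _ ≤ L := hint
      · -- measurability of FT η₀
        have hFTm : AEStronglyMeasurable (FT η₀) (volume : Measure R2) := by
          have hprod : AEStronglyMeasurable
              (fun p : R2 × R2 => (η₀ p.2 : ℂ) * Complex.exp (-Complex.I * (dot p.1 p.2 : ℂ)))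
              ((volume : Measure R2).prod (volume : Measure R2)) := by
            apply AEStronglyMeasurable.mul
            · exact (Complex.continuous_ofReal.comp_aestronglyMeasurable hm).comp_snd
            · apply Continuous.aestronglyMeasurable
              have hdotc : Continuous fun p : R2 × R2 => dot p.1 p.2 := by
                unfold dot; exact continuous_inner
              exact Complex.continuous_exp.comp
                (continuous_const.mul (Complex.continuous_ofReal.comp hdotc))
          exact hprod.integral_prod_right'
        have hg2m : AEStronglyMeasurable
            (fun ζ : R2 => (1 + ‖ζ‖ ^ 2) ^ β * ‖FT η₀ ζ‖ ^ 2)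
            (volume : Measure R2) := by
          apply AEStronglyMeasurable.mul
          · apply Continuous.aestronglyMeasurable
            have hcont : Continuous fun ζ : R2 => 1 + ‖ζ‖ ^ 2 := continuous_const.add (continuous_norm.pow 2)
            exact hcont.rpow_const fun ζ => Or.inr hβ0
          · exact (continuous_norm.comp_aestronglyMeasurable hFTm).pow 2
        have hnI : ¬ Integrable Ψ (volume : Measure R2) := by
          intro hΨI
          apply hI
          apply Integrable.mono' (hΨI.const_mul (((h ^ 2)⁻¹) ^ β)) hg2m
          refine ae_of_all _ fun ζ => ?_
          rw [Real.norm_eq_abs, abs_of_nonneg (by positivity)]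
          have hinv : (1 : ℝ) ≤ (h ^ 2)⁻¹ := by
            have h1 : (0 : ℝ) < h ^ 2 := by positivity
            have h2 : h ^ 2 ≤ 1 := by nlinarith
            have h3 : (0 : ℝ) < (h ^ 2)⁻¹ := by positivity
            nlinarith [mul_inv_cancel₀ h1.ne']
          have h1 : (1 : ℝ) + ‖ζ‖ ^ 2 ≤ (h ^ 2)⁻¹ * (h ^ 2 + ‖ζ‖ ^ 2) := by
            have h0 : (0 : ℝ) < h ^ 2 := by positivity
            rw [mul_add, inv_mul_cancel₀ h0.ne']
            nlinarith [sq_nonneg ‖ζ‖]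
          have h2 : (1 + ‖ζ‖ ^ 2) ^ β ≤ ((h ^ 2)⁻¹) ^ β * (h ^ 2 + ‖ζ‖ ^ 2) ^ β := by
            rw [← Real.mul_rpow (by positivity) (by positivity)]
            exact Real.rpow_le_rpow (by positivity) h1 hβ0
          calc (1 + ‖ζ‖ ^ 2) ^ β * ‖FT η₀ ζ‖ ^ 2
              ≤ (((h ^ 2)⁻¹) ^ β * (h ^ 2 + ‖ζ‖ ^ 2) ^ β) * ‖FT η₀ ζ‖ ^ 2 :=
                mul_le_mul_of_nonneg_right h2 (by positivity)
            _ = ((h ^ 2)⁻¹) ^ β * Ψ ζ := by rw [hΨ]; ring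
        rw [integral_undef hnI, mul_zero]
        exact hL.le
    · have hFT0 : ∀ ζ : R2, FT η₀ ζ = 0 := by
        intro ζ
        apply integral_undef
        intro hIζ
        apply hm
        have h1 := hIζ.aestronglyMeasurable
        have hdotc : Continuous fun x : R2 => dot ζ x := by
          unfold dot; exact Continuous.inner continuous_const continuous_id
        have hcont : Continuous fun x : R2 => Complex.exp (Complex.I * (dot ζ x : ℂ)) :=
          Complex.continuous_exp.comp
            (continuous_const.mul (Complex.continuous_ofReal.comp hdotc))
        have h2 := h1.mul hcont.aestronglyMeasurable
        have h3 : (fun x : R2 => ((η₀ x : ℝ) : ℂ))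
            = fun x => ((η₀ x : ℂ) * Complex.exp (-Complex.I * (dot ζ x : ℂ))) *
                Complex.exp (Complex.I * (dot ζ x : ℂ)) := by
          ext x
          rw [mul_assoc, ← Complex.exp_add]
          rw [show -Complex.I * ((dot ζ x : ℝ) : ℂ) + Complex.I * ((dot ζ x : ℝ) : ℂ) = 0 by ring]
          rw [Complex.exp_zero, mul_one]
        have h4 : AEStronglyMeasurable (fun x : R2 => ((η₀ x : ℝ) : ℂ)) volume := h3 ▸ h2
        have h5 := Complex.continuous_re.comp_aestronglyMeasurable h4
        simpa using h5
      have hΨ0 : (∫ ζ : R2, Ψ ζ) = 0 := by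
        simp [hΨ, hFT0]
      rw [hΨ0, mul_zero]
      exact hL.le
end
end

section
/- For every μ ∈ ℝ there exists a constant C(μ) > 0 such that for every square-integrable f : ℝ² → ℝ vanishing outside the closed unit ball B₁, ∫_0^{2π} ∫_{−1}^{1} |T_μ f(φ, s)|² ds dφ ≤ C(μ) ∫_{ℝ²} |f(x)|² dx. -/
set_option maxHeartbeats 1000000


open MeasureTheory Real Filter

noncomputable section

lemma vec_orthonormal (φ : ℝ) : Orthonormal ℝ (![theta φ, thetaPerp φ] : Fin 2 → R2) := by
  rw [orthonormal_iff_ite]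
  intro i j
  fin_cases i <;> fin_cases j <;>
    simp [theta, thetaPerp, PiLp.inner_apply, Fin.sum_univ_two, RCLike.inner_apply,
      starRingEnd_apply, EuclideanSpace.norm_eq] <;>
    nlinarith [Real.sin_sq_add_cos_sq φ]

def onb (φ : ℝ) : OrthonormalBasis (Fin 2) ℝ R2 :=
  (basisOfOrthonormalOfCardEqFinrank (vec_orthonormal φ) (by simp)).toOrthonormalBasis
    (by rw [coe_basisOfOrthonormalOfCardEqFinrank]; exact vec_orthonormal φ)

lemma onb_apply (φ : ℝ) (i : Fin 2) : onb φ i = ![theta φ, thetaPerp φ] i := by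
  simp [onb, Module.Basis.coe_toOrthonormalBasis, coe_basisOfOrthonormalOfCardEqFinrank]

def Phi (φ : ℝ) : ℝ × ℝ ≃ᵐ R2 :=
  (MeasurableEquiv.finTwoArrow (α := ℝ)).symm.trans
    ((MeasurableEquiv.toLp 2 (Fin 2 → ℝ)).trans
      ((onb φ).repr.symm.toHomeomorph.toMeasurableEquiv))

lemma Phi_mp (φ : ℝ) : MeasurePreserving (Phi φ) volume volume :=
  (((onb φ).repr.symm.measurePreserving).comp
      ((EuclideanSpace.volume_preserving_symm_measurableEquiv_toLp (Fin 2)).symm)).comp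
    ((volume_preserving_finTwoArrow ℝ).symm)

lemma Phi_apply (φ s t : ℝ) : Phi φ (s, t) = s • theta φ + t • thetaPerp φ := by
  show (onb φ).repr.symm (WithLp.toLp 2 ![s, t]) = _
  rw [← OrthonormalBasis.sum_repr_symm]
  simp [Fin.sum_univ_two, onb_apply,
    MeasurableEquiv.finTwoArrow]

lemma norm_sq_eq (φ s t : ℝ) : ‖s • theta φ + t • thetaPerp φ‖ ^ 2 = s ^ 2 + t ^ 2 := by
  have h := vec_orthonormal φ
  have h0 : ‖theta φ‖ = 1 := by simpa using h.1 0
  have h1 : ‖thetaPerp φ‖ = 1 := by simpa using h.1 1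
  have h01 : (inner ℝ (theta φ) (thetaPerp φ) : ℝ) = 0 := by
    simpa using h.2 (show (0 : Fin 2) ≠ 1 by decide)
  rw [norm_add_sq_real]
  simp [norm_smul, inner_smul_left, inner_smul_right, h0, h1, h01, mul_pow, sq_abs]

/-- Cauchy–Schwarz for real integrals. -/
lemma cs_integral {α : Type*} [MeasurableSpace α] (ν : Measure α) (g h : α → ℝ)
    (hg : MemLp g 2 ν) (hh : MemLp h 2 ν) :
    (∫ t, g t * h t ∂ν) ^ 2 ≤ (∫ t, g t ^ 2 ∂ν) * (∫ t, h t ^ 2 ∂ν) := by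
  have hpq : Real.HolderConjugate 2 2 := Real.HolderConjugate.two_two
  have h2 : (ENNReal.ofReal (2 : ℝ)) = 2 := by
    rw [ENNReal.ofReal_ofNat]
  have key := integral_mul_norm_le_Lp_mul_Lq hpq (μ := ν) (f := g) (g := h)
    (by rw [h2]; exact hg) (by rw [h2]; exact hh)
  have hgr : (∫ t, ‖g t‖ ^ (2 : ℝ) ∂ν) = ∫ t, g t ^ 2 ∂ν := by
    refine integral_congr_ae (Eventually.of_forall fun t => ?_)
    show ‖g t‖ ^ (2:ℝ) = g t ^ 2
    rw [Real.rpow_two]; simp [sq_abs]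
  have hhr : (∫ t, ‖h t‖ ^ (2 : ℝ) ∂ν) = ∫ t, h t ^ 2 ∂ν := by
    refine integral_congr_ae (Eventually.of_forall fun t => ?_)
    show ‖h t‖ ^ (2:ℝ) = h t ^ 2
    rw [Real.rpow_two]; simp [sq_abs]
  rw [hgr, hhr] at key
  have hA : (0:ℝ) ≤ ∫ t, g t ^ 2 ∂ν := integral_nonneg fun t => sq_nonneg _
  have hB : (0:ℝ) ≤ ∫ t, h t ^ 2 ∂ν := integral_nonneg fun t => sq_nonneg _
  have habs : |∫ t, g t * h t ∂ν| ≤ ∫ t, ‖g t‖ * ‖h t‖ ∂ν := by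
    calc |∫ t, g t * h t ∂ν| ≤ ∫ t, ‖g t * h t‖ ∂ν := by
          simpa [Real.norm_eq_abs] using norm_integral_le_integral_norm (fun t => g t * h t)
      _ = ∫ t, ‖g t‖ * ‖h t‖ ∂ν := by simp [norm_mul]
  have hsq : ((∫ t, g t ^ 2 ∂ν) ^ ((1:ℝ)/2) * (∫ t, h t ^ 2 ∂ν) ^ ((1:ℝ)/2)) ^ 2
      = (∫ t, g t ^ 2 ∂ν) * (∫ t, h t ^ 2 ∂ν) := by
    rw [mul_pow, ← Real.rpow_natCast (_ ^ ((1:ℝ)/2)) 2, ← Real.rpow_natCast (_ ^ ((1:ℝ)/2)) 2,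
      ← Real.rpow_mul hA, ← Real.rpow_mul hB]
    norm_num
  calc (∫ t, g t * h t ∂ν) ^ 2 = |∫ t, g t * h t ∂ν| ^ 2 := (sq_abs _).symm
    _ ≤ ((∫ t, g t ^ 2 ∂ν) ^ ((1:ℝ)/2) * (∫ t, h t ^ 2 ∂ν) ^ ((1:ℝ)/2)) ^ 2 := by
        apply pow_le_pow_left₀ (abs_nonneg _) (habs.trans key)
    _ = _ := hsq

lemma key_bound (μ : ℝ) (f : R2 → ℝ) (hf : Measurable f)
    (hsupp : ∀ x : R2, x ∉ Metric.closedBall (0 : R2) 1 → f x = 0)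
    (hf2 : MemLp f 2 volume) (φ : ℝ) :
    (∫ s in (-1:ℝ)..1, (ERT μ f φ s) ^ 2) ≤ (2 * Real.exp (2 * |μ|)) * ∫ x : R2, f x ^ 2 := by
  set K : ℝ := 2 * Real.exp (2 * |μ|) with hKdef
  have hKpos : 0 < K := by positivity
  have hf2int : Integrable (fun x => f x ^ 2) volume := hf2.integrable_sq
  have hcont : ∀ s : ℝ, Continuous fun t : ℝ => s • theta φ + t • thetaPerp φ := fun s =>
    continuous_const.add (continuous_id.smul continuous_const)
  have hFint : Integrable (fun p : ℝ × ℝ => f (p.1 • theta φ + p.2 • thetaPerp φ) ^ 2)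
      (volume.prod volume) := by
    have h := ((Phi_mp φ).integrable_comp_emb (Phi φ).measurableEmbedding
      (g := fun x => f x ^ 2)).2 hf2int
    have : (fun x : R2 => f x ^ 2) ∘ (Phi φ) =
        fun p : ℝ × ℝ => f (p.1 • theta φ + p.2 • thetaPerp φ) ^ 2 := by
      funext p
      simp only [Function.comp_apply]
      rw [← Phi_apply φ p.1 p.2]
    rw [this] at h
    rw [← Measure.volume_eq_prod]
    exact h
  have hIf : (∫ p : ℝ × ℝ, f (p.1 • theta φ + p.2 • thetaPerp φ) ^ 2 ∂(volume.prod volume))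
      = ∫ x : R2, f x ^ 2 := by
    rw [← (Phi_mp φ).integral_comp (Phi φ).measurableEmbedding (fun x => f x ^ 2)]
    rw [Measure.volume_eq_prod]
    refine integral_congr_ae (Eventually.of_forall fun p => ?_)
    show f (p.1 • theta φ + p.2 • thetaPerp φ) ^ 2 = f (Phi φ p) ^ 2
    rw [← Phi_apply φ p.1 p.2]
  set G : ℝ → ℝ := fun s => ∫ t : ℝ, f (s • theta φ + t • thetaPerp φ) ^ 2 with hGdef
  have hGint : Integrable G volume := by
    have := hFint.integral_prod_left
    exact this
  have hGnn : ∀ s, 0 ≤ G s := fun s => integral_nonneg fun t => sq_nonneg _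
  have hGsum : ∫ s : ℝ, G s = ∫ x : R2, f x ^ 2 := by
    rw [hGdef]
    rw [MeasureTheory.integral_integral
      (f := fun s t => f (s • theta φ + t • thetaPerp φ) ^ 2) hFint]
    exact hIf
  have hae : ∀ᵐ s : ℝ, (ERT μ f φ s) ^ 2 ≤ K * G s := by
    filter_upwards [hFint.prod_right_ae] with s hs
    have hvanish : ∀ t : ℝ, t ∉ Set.Icc (-1:ℝ) 1 →
        Real.exp (μ * t) * f (s • theta φ + t • thetaPerp φ) = 0 := by
      intro t ht
      rw [Set.mem_Icc, not_and_or, not_le, not_le] at ht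
      have ht2 : 1 < t ^ 2 := by rcases ht with h | h <;> nlinarith
      have hnorm : 1 < ‖s • theta φ + t • thetaPerp φ‖ := by
        nlinarith [norm_sq_eq φ s t, norm_nonneg (s • theta φ + t • thetaPerp φ), sq_nonneg s]
      have : f (s • theta φ + t • thetaPerp φ) = 0 := by
        apply hsupp
        simp only [Metric.mem_closedBall, dist_zero_right]
        exact not_le.2 hnorm
      simp [this]
    have hERTeq : ERT μ f φ s =
        ∫ t in Set.Icc (-1:ℝ) 1, Real.exp (μ * t) * f (s • theta φ + t • thetaPerp φ) :=
      (setIntegral_eq_integral_of_forall_compl_eq_zero hvanish).symm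
    set ν := volume.restrict (Set.Icc (-1:ℝ) 1) with hνdef
    have hmeas_h : Measurable fun t : ℝ => f (s • theta φ + t • thetaPerp φ) :=
      hf.comp (hcont s).measurable
    have hg2 : MemLp (fun t : ℝ => Real.exp (μ * t)) 2 ν := by
      have hc : Continuous fun t : ℝ => Real.exp (μ * t) :=
        Real.continuous_exp.comp (continuous_const.mul continuous_id)
      rw [memLp_two_iff_integrable_sq hc.aestronglyMeasurable]
      exact (hc.pow 2).integrableOn_Icc
    have hh2 : MemLp (fun t : ℝ => f (s • theta φ + t • thetaPerp φ)) 2 ν := by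
      rw [memLp_two_iff_integrable_sq hmeas_h.aestronglyMeasurable]
      exact hs.restrict
    have hcs := cs_integral ν _ _ hg2 hh2
    have hA : ∫ t, (Real.exp (μ * t)) ^ 2 ∂ν ≤ K := by
      have hnn : ∀ᵐ t ∂ν, 0 ≤ (Real.exp (μ * t)) ^ 2 :=
        Eventually.of_forall fun t => sq_nonneg _
      have hbound : ∀ᵐ t ∂ν, (Real.exp (μ * t)) ^ 2 ≤ Real.exp (2 * |μ|) := by
        rw [hνdef, ae_restrict_iff' measurableSet_Icc]
        refine Eventually.of_forall fun t ht => ?_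
        have h1 : (Real.exp (μ * t)) ^ 2 = Real.exp (2 * (μ * t)) := by
          rw [sq, ← Real.exp_add]; ring_nf
        rw [h1]
        apply Real.exp_le_exp.2
        have : |t| ≤ 1 := abs_le.2 ⟨ht.1, ht.2⟩
        calc 2 * (μ * t) ≤ 2 * |μ * t| := by nlinarith [le_abs_self (μ * t)]
          _ = 2 * (|μ| * |t|) := by rw [abs_mul]
          _ ≤ 2 * (|μ| * 1) := by nlinarith [abs_nonneg μ]
          _ = 2 * |μ| := by ring
      calc ∫ t, (Real.exp (μ * t)) ^ 2 ∂ν ≤ ∫ _t, Real.exp (2 * |μ|) ∂ν :=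
            integral_mono_of_nonneg hnn
              (integrableOn_const (by rw [Real.volume_Icc]; exact ENNReal.ofReal_ne_top))
              hbound
        _ = K := by
            rw [integral_const, hνdef, measureReal_def, Measure.restrict_apply_univ, Real.volume_Icc]
            rw [show (1 : ℝ) - (-1) = 2 by norm_num, ENNReal.toReal_ofReal (by norm_num)]
            rw [smul_eq_mul, hKdef]
    have hB : ∫ t, f (s • theta φ + t • thetaPerp φ) ^ 2 ∂ν ≤ G s :=
      setIntegral_le_integral hs (Eventually.of_forall fun t => sq_nonneg _)
    rw [hERTeq]
    calc (∫ t in Set.Icc (-1:ℝ) 1, Real.exp (μ * t) * f (s • theta φ + t • thetaPerp φ)) ^ 2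
        ≤ (∫ t, (Real.exp (μ * t)) ^ 2 ∂ν) * (∫ t, f (s • theta φ + t • thetaPerp φ) ^ 2 ∂ν) :=
          hcs
      _ ≤ K * G s :=
          mul_le_mul hA hB (integral_nonneg fun t => sq_nonneg _) hKpos.le
  rw [intervalIntegral.integral_of_le (by norm_num : (-1:ℝ) ≤ 1)]
  calc (∫ s in Set.Ioc (-1:ℝ) 1, (ERT μ f φ s) ^ 2)
      ≤ ∫ s in Set.Ioc (-1:ℝ) 1, K * G s :=
        integral_mono_of_nonneg (Eventually.of_forall fun s => sq_nonneg _)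
          ((hGint.const_mul K).restrict) (ae_restrict_of_ae hae)
    _ = K * ∫ s in Set.Ioc (-1:ℝ) 1, G s := integral_const_mul K G
    _ ≤ K * ∫ s : ℝ, G s := by
        apply mul_le_mul_of_nonneg_left
          (setIntegral_le_integral hGint (Eventually.of_forall hGnn)) hKpos.le
    _ = K * ∫ x : R2, f x ^ 2 := by rw [hGsum]


/-- `L²` continuity of the exponential Radon transform:
`∫_0^{2π} ∫_{-1}^1 |T_μ f(φ,s)|² ds dφ ≤ C(μ) ∫_{ℝ²} |f|²`. -/
theorem ERT_L2_continuity (μ : ℝ) :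
    ∃ C : ℝ, 0 < C ∧
      ∀ f : R2 → ℝ, Measurable f →
        (∀ x : R2, x ∉ Metric.closedBall (0 : R2) 1 → f x = 0) →
        MemLp f 2 volume →
        (∫ φ in (0:ℝ)..(2 * π), ∫ s in (-1:ℝ)..1, (ERT μ f φ s) ^ 2) ≤
          C * ∫ x : R2, (f x) ^ 2 := by
  set K : ℝ := 2 * Real.exp (2 * |μ|) with hKdef
  have hKpos : 0 < K := by positivity
  refine ⟨2 * π * K, by positivity, fun f hf hsupp hf2 => ?_⟩
  have hIfnn : (0:ℝ) ≤ ∫ x : R2, f x ^ 2 := integral_nonneg fun x => sq_nonneg _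
  have hnn : ∀ φ : ℝ, 0 ≤ ∫ s in (-1:ℝ)..1, (ERT μ f φ s) ^ 2 := fun φ =>
    intervalIntegral.integral_nonneg (by norm_num) fun s _ => sq_nonneg _
  rw [intervalIntegral.integral_of_le (by positivity : (0:ℝ) ≤ 2 * π)]
  have step1 : (∫ φ in Set.Ioc (0:ℝ) (2 * π), ∫ s in (-1:ℝ)..1, (ERT μ f φ s) ^ 2)
      ≤ ∫ _φ in Set.Ioc (0:ℝ) (2 * π), K * ∫ x : R2, f x ^ 2 :=
    integral_mono_of_nonneg (Eventually.of_forall hnn)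
      (integrableOn_const (by rw [Real.volume_Ioc]; exact ENNReal.ofReal_ne_top))
      (Eventually.of_forall fun φ => key_bound μ f hf hsupp hf2 φ)
  refine step1.trans (le_of_eq ?_)
  rw [integral_const, measureReal_def, Measure.restrict_apply_univ, Real.volume_Ioc]
  rw [show (2 * π - 0 : ℝ) = 2 * π by ring, ENNReal.toReal_ofReal (by positivity)]
  rw [smul_eq_mul]
  ring
end
end

section
/- For every C₄ > 0 there exists C₆ > 0 (depending only on C₄) with the following property: for every real m ≥ 1, every natural number M with M ≥ C₄ m², every family Δ₁, …, Δ_M of pairwise disjoint closed balls of radius 1/m contained in the closed unit ball of ℝ², every n ≥ 1, and every family of n lines L₁, …, Lₙ in ℝ², the number of indices k ∈ {1, …, M} such that Δ_k intersects at most C₆ n/m of the lines L₁, …, Lₙ is strictly greater than M/2. -/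
open MeasureTheory Real Filter

noncomputable section

namespace ManyBallsAux

open Finset Metric

/-- rotate by 90°. -/
def perp (u : R2) : R2 := (WithLp.equiv 2 _).symm ![-u 1, u 0]

lemma dot_expand (x y : R2) : dot x y = x 0 * y 0 + x 1 * y 1 := by
  simp [dot, PiLp.inner_apply, Fin.sum_univ_two, mul_comm]

@[simp] lemma perp_apply0 (u : R2) : perp u 0 = -u 1 := by simp [perp]
@[simp] lemma perp_apply1 (u : R2) : perp u 1 = u 0 := by simp [perp]

lemma norm_sq_eq (v : R2) : ‖v‖ ^ 2 = v 0 ^ 2 + v 1 ^ 2 := by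
  rw [← real_inner_self_eq_norm_sq, PiLp.inner_apply]
  simp [Fin.sum_univ_two, sq]

lemma lagrange (u v : R2) (hu : ‖u‖ = 1) :
    ‖v‖ ^ 2 = (dot v u) ^ 2 + (dot v (perp u)) ^ 2 := by
  have h := norm_sq_eq u
  rw [hu] at h
  rw [norm_sq_eq, dot_expand, dot_expand, perp_apply0, perp_apply1]
  nlinarith [h]

lemma norm_perp (u : R2) (hu : ‖u‖ = 1) : ‖perp u‖ = 1 := by
  have h := norm_sq_eq u
  have h2 := norm_sq_eq (perp u)
  rw [hu] at h
  simp only [perp_apply0, perp_apply1] at h2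
  have : ‖perp u‖ ^ 2 = 1 := by nlinarith
  nlinarith [norm_nonneg (perp u)]

lemma dot_sub_left (x y u : R2) : dot (x - y) u = dot x u - dot y u := by
  simp [dot, inner_sub_left]

lemma abs_dot_le (x u : R2) : |dot x u| ≤ ‖x‖ * ‖u‖ := abs_real_inner_le_norm x u

open scoped Classical in
/-- key per-line bound: at most `12 m` of the disjoint balls meet a fixed line. -/
lemma line_bound (m : ℝ) (hm : 1 ≤ m) {M : ℕ} (c : Fin M → R2)
    (hsub : ∀ k, closedBall (c k) (1 / m) ⊆ closedBall (0 : R2) 1)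
    (hdisj : ∀ k l, k ≠ l →
      Disjoint (closedBall (c k) (1 / m)) (closedBall (c l) (1 / m)))
    (u : R2) (hu : ‖u‖ = 1) (s : ℝ) :
    ((univ.filter fun k : Fin M =>
        (closedBall (c k) (1 / m) ∩ {x : R2 | dot x u = s}).Nonempty).card : ℝ)
      ≤ 12 * m := by
  have hm0 : (0 : ℝ) < m := lt_of_lt_of_le one_pos hm
  have hr0 : (0 : ℝ) ≤ 1 / m := by positivity
  set T := univ.filter fun k : Fin M =>
      (closedBall (c k) (1 / m) ∩ {x : R2 | dot x u = s}).Nonempty with hT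
  -- facts about members of T, stated multiplied through by m
  have hmemT : ∀ k ∈ T,
      |dot (c k) u * m - s * m| ≤ 1 ∧ |dot (c k) (perp u) * m| ≤ m := by
    intro k hk
    rw [hT, mem_filter] at hk
    obtain ⟨x, hx1, hx2⟩ := hk.2
    have h1 : |dot (c k) u - s| ≤ 1 / m := by
      have e : dot (c k) u - s = dot (c k - x) u := by
        rw [dot_sub_left]; simp only [Set.mem_setOf_eq] at hx2; rw [hx2]
      rw [e]
      calc |dot (c k - x) u| ≤ ‖c k - x‖ * ‖u‖ := abs_dot_le _ _
        _ = dist (c k) x := by rw [hu, mul_one, dist_eq_norm]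
        _ ≤ 1 / m := by rw [dist_comm]; exact mem_closedBall.mp hx1
    have h2 : |dot (c k) (perp u)| ≤ 1 := by
      have hc : ‖c k‖ ≤ 1 := by
        have : c k ∈ closedBall (0 : R2) 1 := hsub k (mem_closedBall_self hr0)
        simpa [mem_closedBall, dist_zero_right] using this
      calc |dot (c k) (perp u)| ≤ ‖c k‖ * ‖perp u‖ := abs_dot_le _ _
        _ ≤ 1 := by rw [norm_perp u hu, mul_one]; exact hc
    constructor
    · have : |(dot (c k) u - s) * m| ≤ (1 / m) * m := by
        rw [abs_mul, abs_of_pos hm0]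
        exact mul_le_mul_of_nonneg_right h1 hm0.le
      rw [one_div, inv_mul_cancel₀ (ne_of_gt hm0)] at this
      calc |dot (c k) u * m - s * m| = |(dot (c k) u - s) * m| := by ring_nf
        _ ≤ 1 := this
    · rw [abs_mul, abs_of_pos hm0]
      calc |dot (c k) (perp u)| * m ≤ 1 * m :=
          mul_le_mul_of_nonneg_right h2 hm0.le
        _ = m := one_mul m
  have hdist : ∀ k l : Fin M, k ≠ l → 2 < dist (c k) (c l) * m := by
    intro k l hkl
    have h := (disjoint_closedBall_closedBall_iff hr0 hr0).mp (hdisj k l hkl)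
    have h2 : 2 / m < dist (c k) (c l) := by
      have : 2 / m = 1 / m + 1 / m := by ring
      linarith
    exact (div_lt_iff₀ hm0).mp h2
  -- the injection into a small grid
  set f : Fin M → ℤ × ℤ :=
    fun k => (⌊dot (c k) u * m⌋, ⌊dot (c k) (perp u) * m⌋) with hf
  have hinj : Set.InjOn f T := by
    intro k hk l hl heq
    by_contra hne
    have e1 : ⌊dot (c k) u * m⌋ = ⌊dot (c l) u * m⌋ := congrArg Prod.fst heq
    have e2 : ⌊dot (c k) (perp u) * m⌋ = ⌊dot (c l) (perp u) * m⌋ :=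
      congrArg Prod.snd heq
    have fa := Int.floor_le (dot (c k) u * m)
    have fb := Int.lt_floor_add_one (dot (c k) u * m)
    have fc := Int.floor_le (dot (c l) u * m)
    have fd := Int.lt_floor_add_one (dot (c l) u * m)
    rw [e1] at fa fb
    have ga := Int.floor_le (dot (c k) (perp u) * m)
    have gb := Int.lt_floor_add_one (dot (c k) (perp u) * m)
    have gc := Int.floor_le (dot (c l) (perp u) * m)
    have gd := Int.lt_floor_add_one (dot (c l) (perp u) * m)
    rw [e2] at ga gb
    have hdd := hdist k l hne
    have hnorm : dist (c k) (c l) ^ 2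
        = (dot (c k) u - dot (c l) u) ^ 2
          + (dot (c k) (perp u) - dot (c l) (perp u)) ^ 2 := by
      rw [dist_eq_norm, lagrange u _ hu, dot_sub_left, dot_sub_left]
    have hnorm2 : (dist (c k) (c l) * m) ^ 2
        = (dot (c k) u * m - dot (c l) u * m) ^ 2
          + (dot (c k) (perp u) * m - dot (c l) (perp u) * m) ^ 2 := by
      have : (dist (c k) (c l) * m) ^ 2 = dist (c k) (c l) ^ 2 * m ^ 2 := by ring
      rw [this, hnorm]; ring
    have ha : (dot (c k) u * m - dot (c l) u * m) ^ 2 < 1 := by nlinarith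
    have hb : (dot (c k) (perp u) * m - dot (c l) (perp u) * m) ^ 2 < 1 := by
      nlinarith
    have h4 : (2 : ℝ) ^ 2 < (dist (c k) (c l) * m) ^ 2 :=
      pow_lt_pow_left₀ hdd (by norm_num) (by norm_num)
    nlinarith
  have himg : ∀ k ∈ T, f k ∈
      (Finset.Icc (⌊s * m⌋ - 1) (⌊s * m⌋ + 1)) ×ˢ (Finset.Icc ⌊-m⌋ ⌊m⌋) := by
    intro k hk
    obtain ⟨h1, h2⟩ := hmemT k hk
    rw [abs_le] at h1 h2
    simp only [hf, Finset.mem_product, Finset.mem_Icc]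
    have fl := Int.floor_le (s * m)
    refine ⟨⟨?_, ?_⟩, ?_, ?_⟩
    · have : ⌊s * m - (1 : ℤ)⌋ ≤ ⌊dot (c k) u * m⌋ :=
        Int.floor_le_floor (by push_cast; linarith [h1.1])
      rwa [Int.floor_sub_intCast] at this
    · have : ⌊dot (c k) u * m⌋ ≤ ⌊s * m + (1 : ℤ)⌋ :=
        Int.floor_le_floor (by push_cast; linarith [h1.2])
      rwa [Int.floor_add_intCast] at this
    · exact Int.floor_le_floor (by linarith [h2.1])
    · exact Int.floor_le_floor (by linarith [h2.2])
  have hcard : T.card ≤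
      ((Finset.Icc (⌊s * m⌋ - 1) (⌊s * m⌋ + 1)) ×ˢ (Finset.Icc ⌊-m⌋ ⌊m⌋)).card :=
    Finset.card_le_card_of_injOn f himg hinj
  rw [Finset.card_product, Int.card_Icc, Int.card_Icc] at hcard
  have e1 : (⌊s * m⌋ + 1 + 1 - (⌊s * m⌋ - 1)).toNat = 3 := by omega
  rw [e1] at hcard
  have hz : (0 : ℤ) ≤ ⌊m⌋ + 1 - ⌊-m⌋ := by
    have h1 : (⌊-m⌋ : ℝ) ≤ -m := Int.floor_le (-m)
    have h2 : (1 : ℝ) ≤ (⌊m⌋ : ℝ) := by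
      exact_mod_cast Int.le_floor.mpr (by exact_mod_cast hm)
    have : ((⌊m⌋ + 1 - ⌊-m⌋ : ℤ) : ℝ) ≥ 0 := by push_cast; linarith
    exact_mod_cast this
  have h2r : (((⌊m⌋ + 1 - ⌊-m⌋).toNat : ℤ) : ℝ) ≤ 2 * m + 2 := by
    rw [Int.toNat_of_nonneg hz]
    push_cast
    have h1 := Int.floor_le m
    have h2 := Int.lt_floor_add_one (-m)
    linarith
  have hfin : (T.card : ℝ) ≤ 3 * (2 * m + 2) := by
    calc (T.card : ℝ) ≤ ((3 * (⌊m⌋ + 1 - ⌊-m⌋).toNat : ℕ) : ℝ) := by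
          exact_mod_cast hcard
      _ = 3 * (((⌊m⌋ + 1 - ⌊-m⌋).toNat : ℤ) : ℝ) := by push_cast; ring
      _ ≤ 3 * (2 * m + 2) := by linarith
  linarith

end ManyBallsAux

open ManyBallsAux Finset Metric in
/-- for any family of `M ≥ C₄ m²` disjoint balls of radius `1/m` in the unit
ball and any `n` lines, more than `M/2` of the balls meet at most `C₆ n/m` of the lines. -/
theorem many_balls_meet_few_lines (C₄ : ℝ) (hC₄ : 0 < C₄) :
    ∃ C₆ : ℝ, 0 < C₆ ∧
      ∀ m : ℝ, 1 ≤ m → ∀ M : ℕ, C₄ * m ^ 2 ≤ M →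
        ∀ c : Fin M → R2,
          (∀ k : Fin M, Metric.closedBall (c k) (1 / m) ⊆ Metric.closedBall (0 : R2) 1) →
          (∀ k l : Fin M, k ≠ l →
            Disjoint (Metric.closedBall (c k) (1 / m)) (Metric.closedBall (c l) (1 / m))) →
          ∀ n : ℕ, 1 ≤ n → ∀ u : Fin n → R2, (∀ i : Fin n, ‖u i‖ = 1) →
            ∀ s : Fin n → ℝ,
              (M : ℝ) / 2 <
                ({k : Fin M |
                    (({i : Fin n |
                        (Metric.closedBall (c k) (1 / m) ∩
                          {x : R2 | dot x (u i) = s i}).Nonempty} : Set (Fin n)).ncard : ℝ)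
                      ≤ C₆ * n / m} : Set (Fin M)).ncard := by
  classical
  refine ⟨25 / C₄, by positivity, ?_⟩
  intro m hm M hM c hsub hdisj n hn u hu s
  have hm0 : (0 : ℝ) < m := lt_of_lt_of_le one_pos hm
  have hM0 : (0 : ℝ) < M := lt_of_lt_of_le (by positivity) hM
  have hn0 : (0 : ℝ) < n := by exact_mod_cast hn
  set P : Fin n → Fin M → Prop := fun i k =>
    (Metric.closedBall (c k) (1 / m) ∩ {x : R2 | dot x (u i) = s i}).Nonempty with hP
  set A : Fin M → Finset (Fin n) := fun k => univ.filter fun i => P i k with hA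
  set t : ℝ := 25 / C₄ * n / m with htdef
  -- incidence count
  have hswap : ∑ k : Fin M, ((A k).card : ℝ) = ∑ i : Fin n,
      ((univ.filter fun k : Fin M => P i k).card : ℝ) := by
    have : ∑ k : Fin M, (A k).card = ∑ i : Fin n,
        (univ.filter fun k : Fin M => P i k).card := by
      simp only [hA, Finset.card_filter]
      exact Finset.sum_comm
    exact_mod_cast this
  have htotal : ∑ k : Fin M, ((A k).card : ℝ) ≤ n * (12 * m) := by
    rw [hswap]
    calc ∑ i : Fin n, ((univ.filter fun k : Fin M => P i k).card : ℝ)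
        ≤ ∑ _i : Fin n, 12 * m := by
          apply Finset.sum_le_sum
          intro i _
          have := line_bound m hm c hsub hdisj (u i) (hu i) (s i)
          convert this using 3
      _ = n * (12 * m) := by
          rw [Finset.sum_const, card_univ, Fintype.card_fin, nsmul_eq_mul]
  -- bound on the bad set
  set Bad : Finset (Fin M) := univ.filter fun k => ¬ ((A k).card : ℝ) ≤ t with hBad
  have hbadsum : (Bad.card : ℝ) * t ≤ ∑ k : Fin M, ((A k).card : ℝ) := by
    have h1 : (Bad.card : ℝ) * t ≤ ∑ k ∈ Bad, ((A k).card : ℝ) := by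
      calc (Bad.card : ℝ) * t = ∑ _k ∈ Bad, t := by
            rw [Finset.sum_const, nsmul_eq_mul]
        _ ≤ ∑ k ∈ Bad, ((A k).card : ℝ) := by
            apply Finset.sum_le_sum
            intro k hk
            rw [hBad, mem_filter] at hk
            exact le_of_lt (lt_of_not_ge hk.2)
    refine le_trans h1 (Finset.sum_le_sum_of_subset_of_nonneg (Finset.subset_univ _) ?_)
    intro k _ _
    positivity
  have hbt : (Bad.card : ℝ) * t ≤ n * (12 * m) := le_trans hbadsum htotal
  have hbad_lt : (Bad.card : ℝ) < (M : ℝ) / 2 := by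
    have hC₄' : C₄ ≠ 0 := ne_of_gt hC₄
    have hmul : (Bad.card : ℝ) * (25 * n) ≤ 12 * n * (C₄ * m ^ 2) := by
      have hkey : t * (C₄ * m) = 25 * n := by
        rw [htdef]; field_simp
      have h := mul_le_mul_of_nonneg_right hbt (le_of_lt (mul_pos hC₄ hm0))
      calc (Bad.card : ℝ) * (25 * n) = (Bad.card : ℝ) * (t * (C₄ * m)) := by rw [hkey]
        _ = (Bad.card : ℝ) * t * (C₄ * m) := by ring
        _ ≤ n * (12 * m) * (C₄ * m) := h
        _ = 12 * n * (C₄ * m ^ 2) := by ring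
    have hmul2 : (Bad.card : ℝ) * (25 * n) ≤ 12 * n * M :=
      le_trans hmul (by nlinarith [hM, hn0])
    nlinarith [hmul2, hn0, hM0, Nat.cast_nonneg (α := ℝ) Bad.card]
  -- conclude
  have hset : ({k : Fin M |
      (({i : Fin n |
          (Metric.closedBall (c k) (1 / m) ∩
            {x : R2 | dot x (u i) = s i}).Nonempty} : Set (Fin n)).ncard : ℝ)
        ≤ 25 / C₄ * n / m} : Set (Fin M))
      = ↑(univ.filter fun k : Fin M => ((A k).card : ℝ) ≤ t) := by
    ext k
    have hik : ({i : Fin n |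
        (Metric.closedBall (c k) (1 / m) ∩
          {x : R2 | dot x (u i) = s i}).Nonempty} : Set (Fin n)) = ↑(A k) := by
      ext i
      simp [hA, hP]
    simp only [Set.mem_setOf_eq, hik, Set.ncard_coe_finset, Finset.coe_filter,
      Finset.mem_univ, true_and, htdef]
  rw [hset, Set.ncard_coe_finset]
  have hsplit : (univ.filter fun k : Fin M => ((A k).card : ℝ) ≤ t).card + Bad.card = M := by
    rw [hBad]
    rw [Finset.card_filter_add_card_filter_not]
    simp
  have hfin : ((univ.filter fun k : Fin M => ((A k).card : ℝ) ≤ t).card : ℝ)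
      = (M : ℝ) - Bad.card := by
    have h := hsplit
    have : ((univ.filter fun k : Fin M => ((A k).card : ℝ) ≤ t).card : ℝ) + Bad.card
        = M := by exact_mod_cast h
    linarith
  rw [hfin]
  linarith

end
end
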